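/- arXiv:0805.3901 — 4 statements merged into one kernel-verified Lean document; each statement's English description precedes it below -/
import Mathlib

section
/- The SP-gadget satisfies properties P1–P4: its vertex set contains the vertices x_q for q in S; it has a perfect matching; for each pair p ≠ q in S, the graph obtained by deleting x_p and x_q, if non-empty, has a perfect matching; and for each subset L of S with |L| ≥ 3, the graph obtained by deleting {x_l : l ∈ L}, if non-empty, has no perfect matching. -/
/-- Vertex set of the SP-gadget for colour set `α`: the vertices `x_i` (`Sum.inl i`),
the vertices `x'_i` (`Sum.inr (Sum.inl i)`), and `x''_a, x''_b`
(`Sum.inr (Sum.inr false)`, `Sum.inr (Sum.inr true)`). -/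
abbrev SPVert (α : Type*) : Type _ := α ⊕ α ⊕ Bool

/-- The SP-gadget (Szeider): edges `x''_a x''_b`, `x'_i x''_a`, `x'_i x''_b` and
`x_i x'_i` for all `i`. -/
def spGadget (α : Type*) : SimpleGraph (SPVert α) :=
  SimpleGraph.fromRel (fun a b =>
    match a, b with
    | Sum.inl i, Sum.inr (Sum.inl j) => i = j
    | Sum.inr (Sum.inl _), Sum.inr (Sum.inr _) => True
    | Sum.inr (Sum.inr u), Sum.inr (Sum.inr w) => u ≠ w
    | _, _ => False)

/-- A fixed-point-free involution whose graph lies inside `G` yields a perfect matching. -/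
private theorem spg_pm_of_involution {V : Type*} (G : SimpleGraph V) (f : V → V)
    (hadj : ∀ v, G.Adj v (f v)) (hinv : ∀ v, f (f v) = v) :
    ∃ M : G.Subgraph, M.IsPerfectMatching :=
  ⟨⟨Set.univ, fun v w => f v = w, fun {v w} h => h ▸ hadj v,
    fun {v w} _ => trivial, ⟨fun v w h => by subst h; exact hinv v⟩⟩,
    fun v _ => ⟨f v, rfl, fun w hw => (show f v = w from hw).symm⟩, fun v => trivial⟩

/-- The SP-gadget satisfies properties P1–P4 of a P-gadget:
(P1) it contains the distinguished vertices `x_q`, `q ∈ S` (they are pairwise distinct);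
(P2) it has a perfect matching;
(P3) deleting `x_p, x_q` for `p ≠ q` leaves a graph which, if non-empty, has a perfect
matching; (P4) deleting `x_l` for all `l` in a set `L` with `|L| ≥ 3` leaves a graph
which, if non-empty, has no perfect matching. -/
theorem spGadget_is_P_gadget (α : Type*) [Fintype α] [DecidableEq α]
    (hcard : 2 ≤ Fintype.card α) :
    Function.Injective (Sum.inl : α → SPVert α) ∧
    (∃ M : (spGadget α).Subgraph, M.IsPerfectMatching) ∧
    (∀ p q : α, p ≠ q →
      (Nonempty ↥{v : SPVert α | v ≠ Sum.inl p ∧ v ≠ Sum.inl q} →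
        ∃ M : ((spGadget α).induce {v : SPVert α | v ≠ Sum.inl p ∧ v ≠ Sum.inl q}).Subgraph,
          M.IsPerfectMatching)) ∧
    (∀ L : Finset α, 3 ≤ L.card →
      (Nonempty ↥{v : SPVert α | ∀ l ∈ L, v ≠ Sum.inl l} →
        ¬ ∃ M : ((spGadget α).induce {v : SPVert α | ∀ l ∈ L, v ≠ Sum.inl l}).Subgraph,
          M.IsPerfectMatching)) := by
  refine ⟨Sum.inl_injective, ?_, ?_, ?_⟩
  · -- P2
    refine spg_pm_of_involution _ (fun v =>
      match v with
      | Sum.inl i => Sum.inr (Sum.inl i)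
      | Sum.inr (Sum.inl i) => Sum.inl i
      | Sum.inr (Sum.inr b) => Sum.inr (Sum.inr !b)) ?_ ?_
    · rintro (i | i | b) <;> simp [spGadget, SimpleGraph.fromRel_adj]
    · rintro (i | i | b) <;> simp
  · -- P3
    intro p q hpq _
    set s : Set (SPVert α) := {v | v ≠ Sum.inl p ∧ v ≠ Sum.inl q} with hs
    have hg : ∀ v : ↥s,
        (match v.1 with
          | Sum.inl i => Sum.inr (Sum.inl i)
          | Sum.inr (Sum.inl i) =>
            if i = p then Sum.inr (Sum.inr false)
            else if i = q then Sum.inr (Sum.inr true) else Sum.inl i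
          | Sum.inr (Sum.inr false) => Sum.inr (Sum.inl p)
          | Sum.inr (Sum.inr true) => Sum.inr (Sum.inl q) : SPVert α) ∈ s := by
      rintro ⟨(i | i | b), hv⟩
      · simp [hs]
      · obtain ⟨h1, h2⟩ := hv
        by_cases h : i = p
        · simp [h, hs]
        · by_cases h' : i = q <;> simp [h, h', hs, Ne.symm hpq]
      · cases b <;> simp [hs, hpq, Ne.symm hpq]
    refine spg_pm_of_involution _ (fun v => ⟨_, hg v⟩) ?_ ?_
    · rintro ⟨(i | i | b), hv⟩
      · simp [SimpleGraph.comap_adj, spGadget, SimpleGraph.fromRel_adj]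
      · by_cases h : i = p
        · simp [h, SimpleGraph.comap_adj, spGadget, SimpleGraph.fromRel_adj]
        · by_cases h' : i = q <;>
            simp [h, h', Ne.symm hpq, SimpleGraph.comap_adj, spGadget,
              SimpleGraph.fromRel_adj]
      · cases b <;>
          simp [Ne.symm hpq, SimpleGraph.comap_adj, spGadget, SimpleGraph.fromRel_adj]
    · rintro ⟨(i | i | b), hv⟩
      · obtain ⟨h1, h2⟩ := hv
        have hip : i ≠ p := fun h => h1 (by rw [h])
        have hiq : i ≠ q := fun h => h2 (by rw [h])
        simp [hip, hiq]
      · by_cases h : i = p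
        · simp [h]
        · by_cases h' : i = q <;> simp [h, h', Ne.symm hpq]
      · cases b <;> simp [Ne.symm hpq]
  · -- P4
    rintro L hL - ⟨M, hM⟩
    have hmem : ∀ i : α,
        (Sum.inr (Sum.inl i) : SPVert α) ∈ {v : SPVert α | ∀ l ∈ L, v ≠ Sum.inl l} := by
      intro i l _; simp
    have hmem'' : ∀ b : Bool,
        (Sum.inr (Sum.inr b) : SPVert α) ∈ {v : SPVert α | ∀ l ∈ L, v ≠ Sum.inl l} := by
      intro b l _; simp
    have key : ∀ l ∈ L, ∃ b : Bool,
        M.Adj ⟨Sum.inr (Sum.inl l), hmem l⟩ ⟨Sum.inr (Sum.inr b), hmem'' b⟩ := by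
      intro l hl
      obtain ⟨w, hw, -⟩ := hM.1 (hM.2 ⟨Sum.inr (Sum.inl l), hmem l⟩)
      have hadj := M.adj_sub hw
      rw [SimpleGraph.comap_adj] at hadj
      obtain ⟨(j | j | b), hws⟩ := w
      · simp only [spGadget, SimpleGraph.fromRel_adj] at hadj
        have hjl : j = l := by
          rcases hadj with ⟨-, h | h⟩
          · exact h.elim
          · exact h
        exact absurd (by rw [hjl]) (hws l hl)
      · simp only [spGadget, SimpleGraph.fromRel_adj] at hadj
        rcases hadj with ⟨-, h | h⟩ <;> exact h.elim
      · exact ⟨b, hw⟩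
    choose φ hφ using key
    have hinj : ∀ a ∈ L.attach, ∀ b ∈ L.attach,
        φ a.1 a.2 = φ b.1 b.2 → a = b := by
      intro a _ b _ hab
      obtain ⟨u, -, huniq⟩ := hM.1 (hM.2 ⟨Sum.inr (Sum.inr (φ a.1 a.2)), hmem'' _⟩)
      have h1 := huniq _ (M.adj_symm (hφ a.1 a.2))
      have h2 := huniq _ (M.adj_symm (by rw [hab]; exact hφ b.1 b.2))
      have heq : (Sum.inr (Sum.inl a.1) : SPVert α) = Sum.inr (Sum.inl b.1) :=
        congrArg Subtype.val (h1.trans h2.symm)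
      exact Subtype.ext (Sum.inl_injective (Sum.inr_injective heq))
    have hle : L.attach.card ≤ (Finset.univ : Finset Bool).card :=
      Finset.card_le_card_of_injOn (fun a => φ a.1 a.2)
        (fun _ _ => Finset.mem_univ _) hinj
    rw [Finset.card_attach, Finset.card_univ, Fintype.card_bool] at hle
    omega
end

section
/- Colour-connectivity is an equivalence relation on the vertex set of a c-edge-coloured complete graph K^c_n (where each vertex is defined to be colour-connected to itself). -/
def IsPCPath {V σ : Type*} (G : σ → SimpleGraph V) (k : ℕ)
    (v : Fin (k + 1) → V) (col : Fin k → σ) : Prop :=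
  Function.Injective v ∧
    (∀ i : Fin k, (G (col i)).Adj (v i.castSucc) (v i.succ)) ∧
    ∀ i j : Fin k, (j : ℕ) = (i : ℕ) + 1 → col i ≠ col j

/-- `x` and `y` are colour-connected: there are properly coloured `(x,y)`-paths `P`, `Q`
whose first edges have different colours and whose last edges have different colours. -/
def ColourConn {V σ : Type*} (G : σ → SimpleGraph V) (x y : V) : Prop :=
  ∃ (k₁ k₂ : ℕ) (h₁ : 0 < k₁) (h₂ : 0 < k₂)
    (v₁ : Fin (k₁ + 1) → V) (c₁ : Fin k₁ → σ)
    (v₂ : Fin (k₂ + 1) → V) (c₂ : Fin k₂ → σ),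
    IsPCPath G k₁ v₁ c₁ ∧ IsPCPath G k₂ v₂ c₂ ∧
    v₁ 0 = x ∧ v₁ (Fin.last k₁) = y ∧ v₂ 0 = x ∧ v₂ (Fin.last k₂) = y ∧
    c₁ ⟨0, h₁⟩ ≠ c₂ ⟨0, h₂⟩ ∧
    c₁ ⟨k₁ - 1, Nat.sub_lt h₁ Nat.one_pos⟩ ≠ c₂ ⟨k₂ - 1, Nat.sub_lt h₂ Nat.one_pos⟩

namespace CCAux

variable {V σ : Type*} (G : σ → SimpleGraph V)

/-- last vertex of a path starting at `x` with steps `L` -/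
def lastV (x : V) : List (σ × V) → V
  | [] => x
  | (_, y) :: L => lastV y L

def vertsL (x : V) (L : List (σ × V)) : List V := x :: L.map Prod.snd

/-- properly coloured path (with distinct vertices) -/
inductive IsPC : V → List (σ × V) → Prop
  | nil (x : V) : IsPC x []
  | cons {x y : V} {a : σ} {L : List (σ × V)}
      (hadj : (G a).Adj x y)
      (hprop : ∀ p ∈ L.head?, a ≠ p.1)
      (hx : x ∉ vertsL y L)
      (h : IsPC y L) : IsPC x ((a, y) :: L)

variable {G}

theorem lastV_cons (x y : V) (a : σ) (L : List (σ × V)) :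
    lastV x ((a, y) :: L) = lastV y L := rfl

theorem lastV_append (x : V) (L M : List (σ × V)) :
    lastV x (L ++ M) = lastV (lastV x L) M := by
  induction L generalizing x with
  | nil => rfl
  | cons p L ih => obtain ⟨a, y⟩ := p; simp [lastV, ih]

theorem lastV_mem (x : V) (L : List (σ × V)) : lastV x L ∈ vertsL x L := by
  induction L generalizing x with
  | nil => simp [lastV, vertsL]
  | cons p L ih =>
    obtain ⟨a, y⟩ := p
    have := ih y
    simp only [vertsL, List.mem_cons] at this ⊢
    simp only [lastV, List.map_cons, List.mem_cons]
    tauto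

theorem isPC_nodup {x : V} {L : List (σ × V)} (h : IsPC G x L) : (vertsL x L).Nodup := by
  induction h with
  | nil => simp [vertsL]
  | cons hadj hprop hx h ih => exact List.Nodup.cons hx ih

theorem isPC_take {x : V} {L : List (σ × V)} (h : IsPC G x L) (n : ℕ) :
    IsPC G x (L.take n) := by
  induction h generalizing n with
  | nil => simpa using IsPC.nil (G := G) _
  | @cons x y a L hadj hprop hx h ih =>
    cases n with
    | zero => exact IsPC.nil x
    | succ n =>
      refine IsPC.cons hadj ?_ ?_ (ih n)
      · intro p hp
        apply hprop
        rcases L with _ | ⟨q, M⟩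
        · simp at hp
        · cases n with
          | zero => simp at hp
          | succ n => simp at hp ⊢; exact hp
      · intro hmem
        apply hx
        simp only [vertsL, List.mem_cons] at hmem ⊢
        rcases hmem with h1 | h1
        · exact Or.inl h1
        · right
          rw [List.map_take] at h1
          exact List.mem_of_mem_take h1

theorem isPC_drop {x : V} {L : List (σ × V)} (h : IsPC G x L) (n : ℕ) :
    IsPC G (lastV x (L.take n)) (L.drop n) := by
  induction h generalizing n with
  | nil => simpa using IsPC.nil _
  | @cons x y a L hadj hprop hx h ih =>
    cases n with
    | zero => exact IsPC.cons hadj hprop hx h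
    | succ n => simpa [lastV] using ih n

theorem isPC_snoc {x : V} {L : List (σ × V)} (h : IsPC G x L) {b : σ} {w : V}
    (hadj : (G b).Adj (lastV x L) w)
    (hcol : ∀ p ∈ L.getLast?, p.1 ≠ b)
    (hw : w ∉ vertsL x L) :
    IsPC G x (L ++ [(b, w)]) := by
  induction h with
  | nil =>
    refine IsPC.cons hadj (by simp) ?_ (IsPC.nil _)
    · simp only [vertsL, List.map_nil, List.mem_singleton]
      intro hxw; exact hw (by simp [vertsL, hxw])
  | @cons x y a L hadj2 hprop hx h ih =>
    rw [List.cons_append]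
    refine IsPC.cons hadj2 ?_ ?_ ?_
    · intro p hp
      rcases L with _ | ⟨q, M⟩
      · simp at hp
        subst hp
        exact hcol (a, y) (by simp)
      · simp at hp
        exact hprop p (by simp [hp])
    · intro hmem
      simp only [vertsL, List.map_append, List.mem_cons, List.mem_append] at hmem
      rcases hmem with h1 | h1 | h1
      · exact hx (by simp [vertsL, h1])
      · exact hx (by simp only [vertsL, List.mem_cons]; exact Or.inr h1)
      · simp at h1
        exact hw (by simp [vertsL, h1])
    · refine ih ?_ ?_ ?_
      · simpa [lastV] using hadj
      · intro p hp
        refine hcol p ?_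
        rcases L with _ | ⟨q, M⟩
        · simp at hp
        · simpa using hp
      · intro hmem
        exact hw (by simp only [vertsL, List.mem_cons] at hmem ⊢; simp; tauto)

/-- reversed step list: path from `lastV x L` back to `x`. -/
def revSteps (x : V) : List (σ × V) → List (σ × V)
  | [] => []
  | (a, y) :: L => revSteps y L ++ [(a, x)]

theorem revSteps_map_fst (x : V) (L : List (σ × V)) :
    (revSteps x L).map Prod.fst = (L.map Prod.fst).reverse := by
  induction L generalizing x with
  | nil => rfl
  | cons p L ih => obtain ⟨a, y⟩ := p; simp [revSteps, ih]

theorem lastV_revSteps (x : V) (L : List (σ × V)) :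
    lastV (lastV x L) (revSteps x L) = x := by
  induction L generalizing x with
  | nil => rfl
  | cons p L ih =>
    obtain ⟨a, y⟩ := p
    simp only [revSteps, lastV]
    rw [lastV_append, ih]
    rfl

theorem vertsL_revSteps (x : V) (L : List (σ × V)) :
    vertsL (lastV x L) (revSteps x L) = (vertsL x L).reverse := by
  induction L generalizing x with
  | nil => rfl
  | cons p L ih =>
    obtain ⟨a, y⟩ := p
    simp only [revSteps, lastV, vertsL] at ih ⊢
    rw [List.map_append]
    have : lastV y L :: (List.map Prod.snd (revSteps y L) ++ List.map Prod.snd [(a, x)])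
        = (lastV y L :: List.map Prod.snd (revSteps y L)) ++ [x] := by simp
    rw [this, ih]
    simp

theorem isPC_rev {x : V} {L : List (σ × V)} (h : IsPC G x L) :
    IsPC G (lastV x L) (revSteps x L) := by
  induction h with
  | nil => exact IsPC.nil _
  | @cons x y a L hadj hprop hx h ih =>
    rw [lastV_cons]
    show IsPC G (lastV y L) (revSteps y L ++ [(a, x)])
    refine isPC_snoc ih ?_ ?_ ?_
    · rw [lastV_revSteps]; exact hadj.symm
    · intro p hp
      rcases L with _ | ⟨⟨q1, u⟩, M⟩
      · simp [revSteps] at hp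
      · have : revSteps y ((q1, u) :: M) = revSteps u M ++ [(q1, y)] := rfl
        rw [this, List.getLast?_append_cons, List.getLast?_singleton] at hp
        simp only [Option.mem_def, Option.some.injEq] at hp
        subst hp
        exact (hprop (q1, u) (by simp)).symm
    · rw [vertsL_revSteps]
      simpa using hx

theorem getLast?_cons' (p : σ × V) {L : List (σ × V)} {q : σ × V}
    (h : L.getLast? = some q) : (p :: L).getLast? = some q := by
  have h2 : (([p] ++ L).getLast?) = L.getLast?.or [p].getLast? := List.getLast?_append
  simpa [h] using h2

theorem revSteps_headC (x : V) (L : List (σ × V)) :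
    ((revSteps x L).head?).map Prod.fst = (L.getLast?).map Prod.fst := by
  have h1 : ((revSteps x L).map Prod.fst).head? = ((L.map Prod.fst).reverse).head? := by
    rw [revSteps_map_fst]
  rw [List.head?_map, List.head?_reverse, List.getLast?_map] at h1
  exact h1

theorem lastV_take {L : List (σ × V)} {n : ℕ} (h : n < L.length) (x : V) :
    lastV x (L.take (n + 1)) = (L.get ⟨n, h⟩).2 := by
  induction L generalizing x n with
  | nil => simp at h
  | cons p L ih =>
    obtain ⟨a, y⟩ := p
    cases n with
    | zero => cases L <;> rfl
    | succ n =>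
      simp only [List.take_succ_cons, lastV]
      exact ih (by simpa using h) y

theorem lastV_take_drop (x : V) (L : List (σ × V)) (n : ℕ) :
    lastV x L = lastV (lastV x (L.take n)) (L.drop n) := by
  conv_lhs => rw [← List.take_append_drop n L]
  rw [lastV_append]

section Main

variable {G : σ → SimpleGraph V} {x z : V} {e : σ}

/-- every properly coloured `x → z` path starts with colour `e` -/
def Star1 (G : σ → SimpleGraph V) (x z : V) (e : σ) : Prop :=
  ∀ L, IsPC G x L → L ≠ [] → lastV x L = z → ∀ p ∈ L.head?, p.1 = e

/-- `L` is a pc path from `w` back to `x`, avoiding `z`, whose colour at the `x` end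
is not `e`. -/
def Arr (G : σ → SimpleGraph V) (x z : V) (e : σ) (w : V) (L : List (σ × V)) : Prop :=
  IsPC G w L ∧ L ≠ [] ∧ lastV w L = x ∧ (∀ p ∈ L.getLast?, p.1 ≠ e) ∧ z ∉ vertsL w L

theorem dagger (hstar : Star1 G x z e) {w : V} {L : List (σ × V)}
    (hA : Arr G x z e w L) {i : σ} (hadj : (G i).Adj w z) :
    ∀ p ∈ L.head?, p.1 = i := by
  obtain ⟨hpc, hne, hlast, hcolE, hz⟩ := hA
  intro p hp
  by_contra hne2
  have hM : IsPC G z ((i, w) :: L) := by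
    refine IsPC.cons hadj.symm ?_ hz hpc
    intro q hq
    rw [hp] at hq
    simp only [Option.mem_def, Option.some.injEq] at hq
    subst hq
    exact fun hc => hne2 hc.symm
  have hrev : IsPC G (lastV z ((i, w) :: L)) (revSteps z ((i, w) :: L)) := isPC_rev hM
  rw [lastV_cons, hlast] at hrev
  have hRne : revSteps z ((i, w) :: L) ≠ [] := by
    show revSteps w L ++ [(i, z)] ≠ []
    simp
  have hRlast : lastV x (revSteps z ((i, w) :: L)) = z := by
    have := lastV_revSteps z ((i, w) :: L)
    rwa [lastV_cons, hlast] at this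
  -- first colour of the reversed path is the getLast colour of L, which is ≠ e
  obtain ⟨q, hq⟩ := List.getLast?_isSome.mpr hne |> Option.isSome_iff_exists.mp
  have hhead : ((revSteps z ((i, w) :: L)).head?).map Prod.fst = some q.1 := by
    rw [revSteps_headC]
    rw [getLast?_cons' _ hq]
    rfl
  obtain ⟨p', hp'⟩ : ∃ p', (revSteps z ((i, w) :: L)).head? = some p' := by
    cases h : (revSteps z ((i, w) :: L)).head? with
    | none => rw [h] at hhead; simp at hhead
    | some v => exact ⟨v, rfl⟩
  have hp'e : p'.1 = e := hstar _ hrev hRne hRlast p' hp'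
  have : p'.1 = q.1 := by
    rw [hp'] at hhead; simpa using hhead
  exact hcolE q hq (this ▸ hp'e)

theorem lemmaR (hcomplete : ∀ a b : V, a ≠ b → ∃ i, (G i).Adj a b)
    (hstar : Star1 G x z e) (hxz : x ≠ z) :
    ∀ (LQ : List (σ × V)) (w : V) (S : List (σ × V)),
      Arr G x z e w S → IsPC G w LQ → LQ ≠ [] → lastV w LQ = z →
      (∀ p ∈ LQ.head?, ∀ q ∈ S.head?, p.1 ≠ q.1) → False := by
  intro LQ
  induction LQ with
  | nil => intro w S _ _ h _ _; exact h rfl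
  | cons step LQ' ih =>
    obtain ⟨q1, u1⟩ := step
    intro w S hArr hQ hQne hQlast hne
    obtain ⟨hS, hSne, hSlast, hScolE, hSz⟩ := hArr
    cases hQ with
    | @cons _ _ _ _ hadj hprop hw hQ' =>
    have hne1 : ∀ q ∈ S.head?, q1 ≠ q.1 := hne (q1, u1) rfl
    obtain ⟨sp, S0, hSeq⟩ := List.exists_cons_of_ne_nil hSne
    have hQlast' : lastV u1 LQ' = z := hQlast
    rcases LQ' with _ | ⟨⟨q2, u2⟩, M⟩
    · -- single step: u1 = z
      have hu1z : u1 = z := hQlast'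
      subst hu1z
      have h1 := dagger hstar ⟨hS, hSne, hSlast, hScolE, hSz⟩ hadj sp (by rw [hSeq]; rfl)
      exact hne1 sp (by rw [hSeq]; rfl) h1.symm
    · have hq1q2 : q1 ≠ q2 := hprop (q2, u2) rfl
      have hzmem : z ∈ vertsL u1 ((q2, u2) :: M) := hQlast' ▸ lastV_mem _ _
      have hwz : w ≠ z := fun h => hw (h ▸ hzmem)
      cases hQ' with
      | @cons _ _ _ _ hadj2 hprop2 hu1mem hM =>
      have hu1z : u1 ≠ z := by
        intro h
        apply hu1mem
        rw [h]
        exact hQlast' ▸ lastV_mem _ _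
      by_cases hu1x : u1 = x
      · rw [hu1x] at hadj hadj2 hQlast' hu1mem hw
        -- the tail of Q is a pc x → z path, so q2 = e
        have hq2e : q2 = e :=
          hstar _ (IsPC.cons hadj2 hprop2 hu1mem hM) (by simp) hQlast' (q2, u2) rfl
        by_cases hq1e : q1 = e
        · exact hq1q2 (hq1e.trans hq2e.symm)
        · have hwx : w ≠ x := fun h => hw (by rw [h]; exact List.mem_cons_self)
          have harr : Arr G x z e w [(q1, x)] := by
            refine ⟨IsPC.cons hadj (by simp) ?_ (IsPC.nil _), by simp, rfl, ?_, ?_⟩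
            · simpa [vertsL] using hwx
            · intro p hp
              simp only [List.getLast?_singleton, Option.mem_def, Option.some.injEq] at hp
              rw [← hp]
              exact hq1e
            · simp only [vertsL, List.map_cons, List.map_nil, List.mem_cons,
                List.mem_singleton]
              push_neg
              refine ⟨fun h => hwz h.symm, fun h => hxz (h.symm), by simp⟩
          obtain ⟨i, hi⟩ := hcomplete w z hwz
          have h1 := dagger hstar ⟨hS, hSne, hSlast, hScolE, hSz⟩ hi sp (by rw [hSeq]; rfl)
          have h2 := dagger hstar harr hi (q1, x) rfl
          exact hne1 sp (by rw [hSeq]; rfl) (h2.trans h1.symm)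
      · by_cases hmem : u1 ∈ vertsL w S
        · -- u1 occurs inside S
          have hu1w : u1 ≠ w := by
            intro h
            exact hw (h ▸ List.mem_cons_self)
          have hmem2 : u1 ∈ S.map Prod.snd := by
            rcases (List.mem_cons.mp hmem) with h | h
            · exact absurd h hu1w
            · exact h
          obtain ⟨m, hm⟩ := List.mem_iff_get.mp hmem2
          simp only [List.get_eq_getElem, List.getElem_map] at hm
          obtain ⟨n, hn⟩ := m
          have hnS : n < S.length := by simpa using hn
          set S2 := S.drop (n + 1) with hS2def
          have htake : lastV w (S.take (n + 1)) = u1 := by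
            rw [lastV_take hnS]
            exact hm
          have hS2pc : IsPC G u1 S2 := htake ▸ isPC_drop hS (n + 1)
          have hlastS2 : lastV u1 S2 = x := by
            have := lastV_take_drop w S (n + 1)
            rw [htake] at this
            rw [← this, hSlast]
          have hS2ne : S2 ≠ [] := by
            intro h
            rw [h] at hlastS2
            exact hu1x hlastS2
          obtain ⟨qS, hqS⟩ : ∃ qS, S2.getLast? = some qS := by
            cases h : S2.getLast? with
            | none => exact absurd (List.getLast?_eq_none_iff.mp h) hS2ne
            | some v => exact ⟨v, rfl⟩
          have hSgetLast : S.getLast? = some qS := by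
            conv_lhs => rw [← List.take_append_drop (n + 1) S]
            rw [List.getLast?_append, ← hS2def, hqS]
            rfl
          have hqSe : qS.1 ≠ e := hScolE qS hSgetLast
          have hsub : ∀ v, v ∈ S2.map Prod.snd → v ∈ S.map Prod.snd := by
            intro v hv
            rw [hS2def, List.map_drop] at hv
            exact List.mem_of_mem_drop hv
          have hS2z : z ∉ vertsL u1 S2 := by
            intro h
            rcases List.mem_cons.mp h with h | h
            · exact hu1z h.symm
            · exact hSz (List.mem_cons.mpr (Or.inr (hsub z h)))
          have harr2 : Arr G x z e u1 S2 :=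
            ⟨hS2pc, hS2ne, hlastS2, fun p hp => by
              rw [hqS] at hp
              simp only [Option.mem_def, Option.some.injEq] at hp
              exact hp ▸ hqSe, hS2z⟩
          obtain ⟨s2p, S2t, hS2eq⟩ := List.exists_cons_of_ne_nil hS2ne
          by_cases hq2σ : q2 = s2p.1
          · by_cases hq1σ : q1 = s2p.1
            · exact hq1q2 (hq1σ.trans hq2σ.symm)
            · -- build Arr w ((q1,u1) :: S2)
              have hwmap : w ∉ S.map Prod.snd := by
                have hnd := isPC_nodup hS
                simp only [vertsL, List.nodup_cons] at hnd
                exact hnd.1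
              have hwverts : w ∉ vertsL u1 S2 := by
                intro h
                rcases List.mem_cons.mp h with h | h
                · exact absurd h.symm hu1w
                · exact hwmap (hsub w h)
              have harr' : Arr G x z e w ((q1, u1) :: S2) := by
                refine ⟨IsPC.cons hadj ?_ hwverts hS2pc, by simp, hlastS2, ?_, ?_⟩
                · intro p hp
                  rw [hS2eq] at hp
                  simp only [List.head?_cons, Option.mem_def, Option.some.injEq] at hp
                  exact hp ▸ hq1σ
                · intro p hp
                  rw [getLast?_cons' _ hqS] at hp
                  simp only [Option.mem_def, Option.some.injEq] at hp
                  exact hp ▸ hqSe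
                · intro h
                  rcases List.mem_cons.mp h with h | h
                  · exact hwz h.symm
                  · exact hS2z h
              obtain ⟨i, hi⟩ := hcomplete w z hwz
              have h1 := dagger hstar ⟨hS, hSne, hSlast, hScolE, hSz⟩ hi sp (by rw [hSeq]; rfl)
              have h2 := dagger hstar harr' hi (q1, u1) rfl
              exact hne1 sp (by rw [hSeq]; rfl) (h2.trans h1.symm)
          · -- apply IH with u1, S2
            refine ih u1 S2 harr2 (IsPC.cons hadj2 hprop2 hu1mem hM) (by simp) hQlast' ?_
            intro p hp q hq
            simp only [List.head?_cons, Option.mem_def, Option.some.injEq] at hp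
            rw [hS2eq] at hq
            simp only [List.head?_cons, Option.mem_def, Option.some.injEq] at hq
            rw [← hp, ← hq]
            exact hq2σ
        · -- u1 fresh: extend S by one step
          have harr3 : Arr G x z e u1 ((q1, w) :: S) := by
            refine ⟨IsPC.cons hadj.symm ?_ hmem hS, by simp, hSlast, ?_, ?_⟩
            · intro q hq
              exact hne1 q hq
            · intro p hp
              have hSgl : ∃ qS, S.getLast? = some qS := by
                cases h : S.getLast? with
                | none => exact absurd (List.getLast?_eq_none_iff.mp h) hSne
                | some v => exact ⟨v, rfl⟩
              obtain ⟨qS, hqS⟩ := hSgl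
              rw [getLast?_cons' _ hqS] at hp
              simp only [Option.mem_def, Option.some.injEq] at hp
              exact hp ▸ hScolE qS hqS
            · intro h
              rcases List.mem_cons.mp h with h | h
              · exact hu1z h.symm
              · exact hSz h
          refine ih u1 ((q1, w) :: S) harr3 (IsPC.cons hadj2 hprop2 hu1mem hM) (by simp)
            hQlast' ?_
          intro p hp q hq
          simp only [List.head?_cons, Option.mem_def, Option.some.injEq] at hp hq
          rw [← hp, ← hq]
          exact hq1q2.symm

end Main

section Convert

variable {G : σ → SimpleGraph V}

theorem vertsL_length (x : V) (L : List (σ × V)) : (vertsL x L).length = L.length + 1 := by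
  simp [vertsL]

theorem isPC_adj {x : V} {L : List (σ × V)} (h : IsPC G x L) :
    ∀ (n : ℕ) (hn : n < L.length),
      (G (L.get ⟨n, hn⟩).1).Adj
        ((vertsL x L).get ⟨n, by rw [vertsL_length]; omega⟩)
        ((vertsL x L).get ⟨n + 1, by rw [vertsL_length]; omega⟩) := by
  induction h with
  | nil => intro n hn; simp at hn
  | @cons x y a L hadj hprop hx h ih =>
    intro n hn
    cases n with
    | zero =>
      simpa [vertsL] using hadj
    | succ n =>
      have := ih n (by simpa using hn)
      simpa [vertsL] using this

theorem isPC_propcol {x : V} {L : List (σ × V)} (h : IsPC G x L) :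
    ∀ (n : ℕ) (hn : n + 1 < L.length),
      (L.get ⟨n, by omega⟩).1 ≠ (L.get ⟨n + 1, hn⟩).1 := by
  induction h with
  | nil => intro n hn; simp at hn
  | @cons x y a L hadj hprop hx h ih =>
    intro n hn
    cases n with
    | zero =>
      rcases L with _ | ⟨q, M⟩
      · simp at hn
      · exact hprop q rfl
    | succ n =>
      exact ih n (by simpa using hn)

theorem vertsL_get_last (x : V) (L : List (σ × V)) :
    (vertsL x L).get ⟨L.length, by rw [vertsL_length]; omega⟩ = lastV x L := by
  induction L generalizing x with
  | nil => rfl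
  | cons p L ih =>
    obtain ⟨a, y⟩ := p
    simpa [vertsL, lastV] using ih y

/-- convert a nonempty list path into the `Fin` form -/
theorem listToFin {x : V} {L : List (σ × V)} (h : IsPC G x L) (hne : L ≠ []) :
    ∃ (v : Fin (L.length + 1) → V) (c : Fin L.length → σ),
      IsPCPath G L.length v c ∧ v 0 = x ∧ v (Fin.last _) = lastV x L ∧
      (L.head?).map Prod.fst = some (c ⟨0, List.length_pos_iff.mpr hne⟩) ∧
      (L.getLast?).map Prod.fst =
        some (c ⟨L.length - 1, Nat.sub_lt (List.length_pos_iff.mpr hne) Nat.one_pos⟩) := by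
  refine ⟨fun i => (vertsL x L).get (i.cast (vertsL_length x L).symm),
    fun i => (L.get i).1, ⟨?_, ?_, ?_⟩, rfl, ?_, ?_, ?_⟩
  · intro i j hij
    have hmod : Function.Injective (vertsL x L).get :=
      List.nodup_iff_injective_get.mp (isPC_nodup h)
    have := hmod hij
    exact Fin.ext (by simpa using congrArg Fin.val this)
  · intro i
    have := isPC_adj h i.1 i.2
    convert this using 2
    all_goals exact Fin.ext (by simp)
  · intro i j hij
    intro hc
    simp only at hc
    refine isPC_propcol h i.1 (by omega) ?_
    have e1 : (⟨i.1, i.2⟩ : Fin L.length) = i := Fin.ext rfl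
    have e2 : (⟨i.1 + 1, by omega⟩ : Fin L.length) = j := Fin.ext (by simp [hij])
    rw [e1, e2]
    exact hc
  · have := vertsL_get_last x L
    rw [← this]
    congr 1
  · rcases L with _ | ⟨p, M⟩
    · exact absurd rfl hne
    · rfl
  · obtain ⟨q, hq⟩ : ∃ q, L.getLast? = some q := by
      cases hgl : L.getLast? with
      | none => exact absurd (List.getLast?_eq_none_iff.mp hgl) hne
      | some v => exact ⟨v, rfl⟩
    rw [hq]
    have h1 : L.getLast hne = q := by
      rw [List.getLast?_eq_getLast hne] at hq
      exact (Option.some.injEq _ _ ▸ hq : _)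
    have h2 : L.getLast hne = L.get ⟨L.length - 1, by
        have := List.length_pos_iff.mpr hne; omega⟩ := List.getLast_eq_getElem hne
    simp only [Option.map_some]
    rw [← h1, h2]

/-- convert the `Fin` form into a list path -/
theorem finToList_aux {k : ℕ} {v : Fin (k + 1) → V} {c : Fin k → σ}
    (h : IsPCPath G k v c) :
    ∀ (n j : ℕ) (hjn : j + n = k),
      ∃ L : List (σ × V),
        IsPC G (v ⟨j, by omega⟩) L ∧
        L.map Prod.fst = List.ofFn (fun i : Fin n => c ⟨j + i, by omega⟩) ∧
        L.map Prod.snd = List.ofFn (fun i : Fin n => v ⟨j + i + 1, by omega⟩) ∧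
        lastV (v ⟨j, by omega⟩) L = v ⟨k, by omega⟩ := by
  obtain ⟨hinj, hadj, hprop⟩ := h
  intro n
  induction n with
  | zero =>
    intro j hjn
    refine ⟨[], IsPC.nil _, by simp, by simp, ?_⟩
    show v _ = v _
    congr 1
    exact Fin.ext (by simpa using hjn)
  | succ n ih =>
    intro j hjn
    obtain ⟨L', hL'pc, hL'fst, hL'snd, hL'last⟩ := ih (j + 1) (by omega)
    refine ⟨(c ⟨j, by omega⟩, v ⟨j + 1, by omega⟩) :: L', ?_, ?_, ?_, ?_⟩
    · refine IsPC.cons ?_ ?_ ?_ hL'pc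
      · have := hadj ⟨j, by omega⟩
        rw [Fin.castSucc_mk, Fin.succ_mk] at this
        exact this
      · intro p hp
        have hfst : p.1 ∈ (L'.map Prod.fst).head? := by
          rw [List.head?_map, hp]
          rfl
        rw [hL'fst] at hfst
        cases n with
        | zero => simp at hfst
        | succ m =>
          rw [List.ofFn_succ] at hfst
          simp only [List.head?_cons, Option.mem_def, Option.some.injEq] at hfst
          rw [← hfst]
          exact hprop ⟨j, by omega⟩ ⟨j + 1, by omega⟩ rfl
      · intro hmem
        simp only [vertsL, List.mem_cons] at hmem
        rcases hmem with h1 | h1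
        · have := hinj h1
          have := congrArg Fin.val this
          simp at this
        · rw [hL'snd, List.mem_ofFn] at h1
          obtain ⟨i, hi⟩ := h1
          have := hinj hi
          have := congrArg Fin.val this
          simp at this
          omega
    · rw [List.map_cons, hL'fst, List.ofFn_succ]
      refine congrArg₂ List.cons ?_ (congrArg List.ofFn (funext fun i => ?_))
      · exact congrArg c (Fin.ext (by simp))
      · exact congrArg c (Fin.ext (by simp only [Fin.val_succ]; omega))
    · rw [List.map_cons, hL'snd, List.ofFn_succ]
      refine congrArg₂ List.cons ?_ (congrArg List.ofFn (funext fun i => ?_))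
      · exact congrArg v (Fin.ext (by simp))
      · exact congrArg v (Fin.ext (by simp only [Fin.val_succ]; omega))
    · rw [lastV_cons, hL'last]

theorem finToList {k : ℕ} (hk : 0 < k) {v : Fin (k + 1) → V} {c : Fin k → σ}
    (h : IsPCPath G k v c) :
    ∃ L : List (σ × V), IsPC G (v 0) L ∧ L ≠ [] ∧
      lastV (v 0) L = v (Fin.last k) ∧
      (L.head?).map Prod.fst = some (c ⟨0, hk⟩) ∧
      (L.getLast?).map Prod.fst = some (c ⟨k - 1, Nat.sub_lt hk Nat.one_pos⟩) := by
  obtain ⟨L, hpc, hfst, hsnd, hlast⟩ := finToList_aux h k 0 (by omega)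
  have hv0 : v (⟨0, by omega⟩ : Fin (k + 1)) = v 0 := rfl
  have hlen : L.length = k := by
    have := congrArg List.length hfst
    simpa using this
  have hLne : L ≠ [] := by
    intro hL
    rw [hL] at hlen
    simp at hlen
    omega
  rw [hv0] at hpc
  refine ⟨L, hpc, hLne, ?_, ?_, ?_⟩
  · rw [← hv0, hlast]
    exact congrArg v (Fin.ext rfl)
  · rw [← List.head?_map, hfst]
    obtain ⟨m, rfl⟩ : ∃ m, k = m + 1 := ⟨k - 1, by omega⟩
    rw [List.ofFn_succ]
    simp only [List.head?_cons, Option.some.injEq]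
    exact congrArg c (Fin.ext (by simp))
  · rw [← List.getLast?_map, hfst]
    obtain ⟨m, rfl⟩ : ∃ m, k = m + 1 := ⟨k - 1, by omega⟩
    rw [List.ofFn_succ', List.concat_eq_append, List.getLast?_append]
    show ((some _).or _) = _
    rw [show ∀ (a : σ) (o : Option σ), (some a).or o = some a from fun _ _ => rfl]
    simp only [Option.some.injEq]
    exact congrArg c (Fin.ext (by simp))

end Convert

section Assemble

variable {G : σ → SimpleGraph V}

/-- there is a pc path from `x` to `y` with first colour `a` and last colour `b` -/
def LP (G : σ → SimpleGraph V) (x y : V) (a b : σ) : Prop :=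
  ∃ L, IsPC G x L ∧ L ≠ [] ∧ lastV x L = y ∧
    L.head?.map Prod.fst = some a ∧ L.getLast?.map Prod.fst = some b

theorem colourConn_iff {x y : V} :
    ColourConn G x y ↔ ∃ a₁ b₁ a₂ b₂, a₁ ≠ a₂ ∧ b₁ ≠ b₂ ∧ LP G x y a₁ b₁ ∧ LP G x y a₂ b₂ := by
  constructor
  · rintro ⟨k₁, k₂, h₁, h₂, v₁, c₁, v₂, c₂, hp₁, hp₂, hx₁, hy₁, hx₂, hy₂, hc0, hcl⟩
    obtain ⟨L₁, hL₁, hne₁, hlast₁, hh₁, hl₁⟩ := finToList h₁ hp₁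
    obtain ⟨L₂, hL₂, hne₂, hlast₂, hh₂, hl₂⟩ := finToList h₂ hp₂
    rw [hx₁] at hL₁ hlast₁
    rw [hx₂] at hL₂ hlast₂
    rw [hy₁] at hlast₁
    rw [hy₂] at hlast₂
    exact ⟨_, _, _, _, hc0, hcl, ⟨L₁, hL₁, hne₁, hlast₁, hh₁, hl₁⟩,
      ⟨L₂, hL₂, hne₂, hlast₂, hh₂, hl₂⟩⟩
  · rintro ⟨a₁, b₁, a₂, b₂, ha, hb, ⟨L₁, hL₁, hne₁, hlast₁, hh₁, hl₁⟩,
      ⟨L₂, hL₂, hne₂, hlast₂, hh₂, hl₂⟩⟩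
    obtain ⟨v₁, c₁, hp₁, hv₁0, hv₁l, hc₁0, hc₁l⟩ := listToFin hL₁ hne₁
    obtain ⟨v₂, c₂, hp₂, hv₂0, hv₂l, hc₂0, hc₂l⟩ := listToFin hL₂ hne₂
    refine ⟨L₁.length, L₂.length, List.length_pos_iff.mpr hne₁, List.length_pos_iff.mpr hne₂,
      v₁, c₁, v₂, c₂, hp₁, hp₂, hv₁0, by rw [hv₁l, hlast₁], hv₂0, by rw [hv₂l, hlast₂],
      ?_, ?_⟩
    · rw [hc₁0] at hh₁
      rw [hc₂0] at hh₂
      simp only [Option.some.injEq] at hh₁ hh₂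
      rw [hh₁, hh₂]
      exact ha
    · rw [hc₁l] at hl₁
      rw [hc₂l] at hl₂
      simp only [Option.some.injEq] at hl₁ hl₂
      rw [hl₁, hl₂]
      exact hb

theorem revSteps_lastC (x : V) (L : List (σ × V)) :
    ((revSteps x L).getLast?).map Prod.fst = (L.head?).map Prod.fst := by
  have h1 : ((revSteps x L).map Prod.fst).getLast? = ((L.map Prod.fst).reverse).getLast? := by
    rw [revSteps_map_fst]
  rw [List.getLast?_map, List.getLast?_reverse, List.head?_map] at h1
  exact h1

theorem revSteps_ne_nil {x : V} {L : List (σ × V)} (h : L ≠ []) : revSteps x L ≠ [] := by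
  intro hc
  apply h
  have := revSteps_map_fst x L
  rw [hc] at this
  simpa using (List.reverse_eq_nil_iff.mp (by simpa using this.symm))

theorem LP_rev {x y : V} {a b : σ} (h : LP G x y a b) : LP G y x b a := by
  obtain ⟨L, hpc, hne, hlast, hh, hl⟩ := h
  refine ⟨revSteps x L, ?_, revSteps_ne_nil hne, ?_, ?_, ?_⟩
  · have := isPC_rev hpc
    rwa [hlast] at this
  · have := lastV_revSteps x L
    rwa [hlast] at this
  · rw [revSteps_headC]
    exact hl
  · rw [revSteps_lastC]
    exact hh

theorem colourConn_symm {x y : V} (h : ColourConn G x y) : ColourConn G y x := by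
  rw [colourConn_iff] at h ⊢
  obtain ⟨a₁, b₁, a₂, b₂, ha, hb, h1, h2⟩ := h
  exact ⟨b₁, a₁, b₂, a₂, hb, ha, LP_rev h1, LP_rev h2⟩

theorem star1_false (hcomplete : ∀ a b : V, a ≠ b → ∃ i, (G i).Adj a b)
    {x y z : V} (hxy : ColourConn G x y) (hyz : ColourConn G y z)
    (hxz : x ≠ z) (e : σ) : ¬Star1 G x z e := by
  intro hstar
  rw [colourConn_iff] at hxy hyz
  obtain ⟨a₁, b₁, a₂, b₂, ha, hb, hP₁, hP₂⟩ := hxy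
  -- choose a path from x to y with first colour ≠ e
  obtain ⟨a, b, ⟨L, hpc, hne, hlastv, hhead, hlastc⟩, hae⟩ :
      ∃ a b, LP G x y a b ∧ a ≠ e := by
    by_cases h : a₁ = e
    · exact ⟨a₂, b₂, hP₂, fun hc => ha (h.trans hc.symm)⟩
    · exact ⟨a₁, b₁, hP₁, h⟩
  -- z is not on this path
  have hz : z ∉ vertsL x L := by
    intro hmem
    rcases List.mem_cons.mp hmem with h1 | h1
    · exact hxz h1.symm
    · obtain ⟨m, hm⟩ := List.mem_iff_get.mp h1
      simp only [List.get_eq_getElem, List.getElem_map] at hm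
      obtain ⟨n, hn⟩ := m
      have hnL : n < L.length := by simpa using hn
      have htake : IsPC G x (L.take (n + 1)) := isPC_take hpc (n + 1)
      have hlastt : lastV x (L.take (n + 1)) = z := by
        rw [lastV_take hnL]
        exact hm
      have htne : L.take (n + 1) ≠ [] := by
        intro hc
        rcases List.take_eq_nil_iff.mp hc with h | h
        · exact Nat.succ_ne_zero n h
        · exact hne h
      obtain ⟨p, hp, hpa⟩ := Option.map_eq_some_iff.mp hhead
      have hph : p ∈ (L.take (n + 1)).head? := by
        rcases L with _ | ⟨q, M⟩
        · exact absurd rfl hne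
        · simpa using hp
      have := hstar _ htake htne hlastt p hph
      exact hae (hpa ▸ this)
  -- the reversed path is an arrival at y
  have harr : Arr G x z e y (revSteps x L) := by
    refine ⟨?_, revSteps_ne_nil hne, ?_, ?_, ?_⟩
    · have := isPC_rev hpc
      rwa [hlastv] at this
    · have := lastV_revSteps x L
      rwa [hlastv] at this
    · intro p hp
      have : ((revSteps x L).getLast?).map Prod.fst = some a := by
        rw [revSteps_lastC]; exact hhead
      rw [hp] at this
      simp only [Option.map_some, Option.some.injEq] at this
      rw [this]
      exact hae
    · have := vertsL_revSteps x L
      rw [hlastv] at this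
      rw [this]
      intro hc
      exact hz (List.mem_reverse.mp hc)
  -- head colour of the arrival path is b
  have hSb : ((revSteps x L).head?).map Prod.fst = some b := by
    rw [revSteps_headC]; exact hlastc
  -- choose a path from y to z with first colour ≠ b
  obtain ⟨c₁, d₁, c₂, d₂, hc, hd, hQ₁, hQ₂⟩ := hyz
  obtain ⟨cc, d, ⟨LQ, hQpc, hQne, hQlast, hQhead, hQlastc⟩, hcb⟩ :
      ∃ cc d, LP G y z cc d ∧ cc ≠ b := by
    by_cases h : c₁ = b
    · exact ⟨c₂, d₂, hQ₂, fun hcc => hc (h.trans hcc.symm)⟩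
    · exact ⟨c₁, d₁, hQ₁, h⟩
  refine lemmaR hcomplete hstar hxz LQ y (revSteps x L) harr hQpc hQne hQlast ?_
  intro p hp q hq
  obtain ⟨p', hp', hpa'⟩ := Option.map_eq_some_iff.mp hQhead
  rw [hp'] at hp
  simp only [Option.mem_def, Option.some.injEq] at hp
  rw [hq] at hSb
  simp only [Option.map_some, Option.some.injEq] at hSb
  rw [hp] at hpa'
  rw [hpa', hSb]
  exact hcb

theorem colourConn_trans (hcomplete : ∀ a b : V, a ≠ b → ∃ i, (G i).Adj a b)
    {x y z : V} (hxy : ColourConn G x y) (hyz : ColourConn G y z) (hxz : x ≠ z) :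
    ColourConn G x z := by
  obtain ⟨e, he⟩ := hcomplete x z hxz
  by_contra hcc
  have hLPee : LP G x z e e := by
    refine ⟨[(e, z)], IsPC.cons he (by simp) ?_ (IsPC.nil _), by simp, rfl, rfl, rfl⟩
    simp only [vertsL, List.map_nil, List.mem_singleton, List.mem_cons]
    simpa using hxz
  have hpair : ∀ a b a' b', LP G x z a b → LP G x z a' b' → a = a' ∨ b = b' := by
    intro a b a' b' h1 h2
    by_contra hcon
    push_neg at hcon
    exact hcc (colourConn_iff.mpr ⟨a, b, a', b', hcon.1, hcon.2, h1, h2⟩)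
  have hkey : (∀ a b, LP G x z a b → a = e) ∨ (∀ a b, LP G x z a b → b = e) := by
    by_contra hcon
    push_neg at hcon
    obtain ⟨⟨a, b, h1, hane⟩, ⟨a', b', h2, hbne⟩⟩ := hcon
    have hbe : b = e := (hpair _ _ _ _ h1 hLPee).resolve_left hane
    have hae' : a' = e := (hpair _ _ _ _ h2 hLPee).resolve_right hbne
    rcases hpair _ _ _ _ h1 h2 with h | h
    · exact hane (h.trans hae')
    · exact hbne (h.symm.trans hbe)
  have hgl : ∀ (L : List (σ × V)), L ≠ [] → ∃ q : σ × V, L.getLast? = some q := by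
    intro L hne
    cases h : L.getLast? with
    | none => exact absurd (List.getLast?_eq_none_iff.mp h) hne
    | some v => exact ⟨v, rfl⟩
  rcases hkey with hk | hk
  · have hstar : Star1 G x z e := by
      intro L hpc hne hlast p hp
      obtain ⟨q, hq⟩ := hgl L hne
      exact hk p.1 q.1 ⟨L, hpc, hne, hlast, by rw [show L.head? = some p from hp]; rfl,
        by rw [hq]; rfl⟩
    exact star1_false hcomplete hxy hyz hxz e hstar
  · have hstar : Star1 G z x e := by
      intro L hpc hne hlast p hp
      obtain ⟨q, hq⟩ := hgl L hne
      have hlp : LP G z x p.1 q.1 :=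
        ⟨L, hpc, hne, hlast, by rw [show L.head? = some p from hp]; rfl, by rw [hq]; rfl⟩
      exact hk _ _ (LP_rev hlp)
    exact star1_false hcomplete (colourConn_symm hyz) (colourConn_symm hxy)
      (Ne.symm hxz) e hstar

end Assemble

end CCAux


/-- Colour-connectivity (with each vertex colour-connected to itself) is an equivalence
relation on the vertex set of a `c`-edge-coloured complete graph `K^c_n`. -/
theorem colour_connectivity_equivalence {V : Type*} [Fintype V] (c : ℕ)
    (G : Fin c → SimpleGraph V)
    (hsimple : ∀ (i j : Fin c) (x y : V), (G i).Adj x y → (G j).Adj x y → i = j)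
    (hcomplete : ∀ x y : V, x ≠ y → ∃ i, (G i).Adj x y) :
    Equivalence (fun x y : V => x = y ∨ ColourConn G x y) := by
  constructor
  · intro x
    exact Or.inl rfl
  · intro x y h
    rcases h with h | h
    · exact Or.inl h.symm
    · exact Or.inr (CCAux.colourConn_symm h)
  · intro x y z hxy hyz
    rcases hxy with rfl | hxy
    · exact hyz
    rcases hyz with rfl | hyz
    · exact Or.inr hxy
    by_cases hxz : x = z
    · exact Or.inl hxz
    · exact Or.inr (CCAux.colourConn_trans hcomplete hxy hyz hxz)
end

section
/- If the number of colours c satisfies c ≥ (n−1)(n−2)/2 + 2, then every c-edge-coloured complete graph K^c_n in which all c colours are used has a properly coloured Hamilton cycle. -/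
def Fin.cyclicSucc {k : ℕ} (i : Fin k) : Fin k :=
  ⟨(i.val + 1) % k, Nat.mod_lt _ (Nat.lt_of_le_of_lt (Nat.zero_le _) i.isLt)⟩

def IsPCCycle {V σ : Type*} (G : σ → SimpleGraph V) (k : ℕ)
    (v : Fin k → V) (col : Fin k → σ) : Prop :=
  2 ≤ k ∧ Function.Injective v ∧
    (∀ i : Fin k, (G (col i)).Adj (v i) (v i.cyclicSucc)) ∧
    ∀ i : Fin k, col i ≠ col i.cyclicSucc

open Finset


lemma aux_card_ne3 {α : Type*} [Fintype α] [DecidableEq α] {a b c : α}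
    (hab : a ≠ b) (hac : a ≠ c) (hbc : b ≠ c) :
    Fintype.card {x : α // x ≠ a ∧ x ≠ b ∧ x ≠ c} = Fintype.card α - 3 := by
  rw [Fintype.card_subtype]
  have h : (univ.filter fun x => x ≠ a ∧ x ≠ b ∧ x ≠ c) = ({a, b, c} : Finset α)ᶜ := by
    ext x; simp [not_or]
  rw [h, Finset.card_compl]
  congr 1
  rw [card_insert_of_notMem (by simp [hab, hac]),
    card_insert_of_notMem (by simp [hbc]), card_singleton]

/-- Bound on the number of bijections with three prescribed values. -/
lemma aux_card_fix3 {n : ℕ} {V : Type*} [Fintype V] [DecidableEq V]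
    (hV : Fintype.card V = n) {a₁ a₂ a₃ : Fin n} (b₁ b₂ b₃ : V)
    (h12 : a₁ ≠ a₂) (h13 : a₁ ≠ a₃) (h23 : a₂ ≠ a₃) :
    (univ.filter (fun e : Fin n ≃ V => e a₁ = b₁ ∧ e a₂ = b₂ ∧ e a₃ = b₃)).card
      ≤ Nat.factorial (n - 3) := by
  classical
  by_cases hb : b₁ ≠ b₂ ∧ b₁ ≠ b₃ ∧ b₂ ≠ b₃
  · obtain ⟨g12, g13, g23⟩ := hb
    set A := {x : Fin n // x ≠ a₁ ∧ x ≠ a₂ ∧ x ≠ a₃}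
    set B := {y : V // y ≠ b₁ ∧ y ≠ b₂ ∧ y ≠ b₃}
    have cardA : Fintype.card A = n - 3 := by
      rw [aux_card_ne3 h12 h13 h23, Fintype.card_fin]
    have cardB : Fintype.card B = n - 3 := by
      rw [aux_card_ne3 g12 g13 g23, hV]
    -- injection into A ↪ B
    have key : ∀ e ∈ univ.filter (fun e : Fin n ≃ V => e a₁ = b₁ ∧ e a₂ = b₂ ∧ e a₃ = b₃),
        ∀ x : A, (e : Fin n ≃ V) x.1 ≠ b₁ ∧ e x.1 ≠ b₂ ∧ e x.1 ≠ b₃ := by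
      intro e he x
      simp only [mem_filter] at he
      obtain ⟨-, he1, he2, he3⟩ := he
      refine ⟨?_, ?_, ?_⟩
      · intro h; exact x.2.1 (e.injective (h.trans he1.symm))
      · intro h; exact x.2.2.1 (e.injective (h.trans he2.symm))
      · intro h; exact x.2.2.2 (e.injective (h.trans he3.symm))
    have hle := Finset.card_le_card_of_injOn
      (f := fun e : Fin n ≃ V => if he : e a₁ = b₁ ∧ e a₂ = b₂ ∧ e a₃ = b₃ then
        (⟨fun x : A => (⟨e x.1, by
          refine ⟨?_, ?_, ?_⟩
          · intro h; exact x.2.1 (e.injective (h.trans he.1.symm))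
          · intro h; exact x.2.2.1 (e.injective (h.trans he.2.1.symm))
          · intro h; exact x.2.2.2 (e.injective (h.trans he.2.2.symm))⟩ : B),
          fun x y hxy => Subtype.ext (e.injective (congrArg Subtype.val hxy))⟩ : A ↪ B)
        else (Fintype.equivOfCardEq (cardA.trans cardB.symm)).toEmbedding)
      (s := univ.filter (fun e : Fin n ≃ V => e a₁ = b₁ ∧ e a₂ = b₂ ∧ e a₃ = b₃))
      (t := (univ : Finset (A ↪ B)))
      (fun e _ => mem_univ _)
      ?_
    · calc _ ≤ (univ : Finset (A ↪ B)).card := hle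
        _ = Fintype.card (A ↪ B) := rfl
        _ = (Fintype.card B).descFactorial (Fintype.card A) := Fintype.card_embedding_eq
        _ = Nat.factorial (n - 3) := by rw [cardA, cardB, Nat.descFactorial_self]
    · intro e he e' he' hee
      simp only [mem_coe, mem_filter] at he he'
      simp only [dif_pos he.2, dif_pos he'.2] at hee
      ext x
      by_cases hx1 : x = a₁
      · rw [hx1, he.2.1, he'.2.1]
      by_cases hx2 : x = a₂
      · rw [hx2, he.2.2.1, he'.2.2.1]
      by_cases hx3 : x = a₃
      · rw [hx3, he.2.2.2, he'.2.2.2]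
      · have := congrFun (congrArg (fun f : A ↪ B => (f : A → B)) hee) ⟨x, hx1, hx2, hx3⟩
        exact congrArg Subtype.val this
  · have : (univ.filter (fun e : Fin n ≃ V => e a₁ = b₁ ∧ e a₂ = b₂ ∧ e a₃ = b₃)) = ∅ := by
      ext e
      simp only [mem_filter, mem_univ, true_and, Finset.notMem_empty, iff_false]
      rintro ⟨h1, h2, h3⟩
      push_neg at hb
      by_cases g12 : b₁ = b₂
      · exact h12 (e.injective (h1.trans (g12.trans h2.symm)))
      by_cases g13 : b₁ = b₃
      · exact h13 (e.injective (h1.trans (g13.trans h3.symm)))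
      · exact h23 (e.injective (h2.trans ((hb g12 g13).trans h3.symm)))
    rw [this]; simp



/-- (Manoussakis, Spyratos, Tuza, Voigt)  If `c ≥ (n−1)(n−2)/2 + 2`, then every
`c`-edge-coloured complete graph `K^c_n` in which all `c` colours are used has a
properly coloured Hamilton cycle. -/
theorem many_colours_pc_hamilton {V : Type*} [Fintype V] (c : ℕ)
    (G : Fin c → SimpleGraph V)
    (hsimple : ∀ (i j : Fin c) (x y : V), (G i).Adj x y → (G j).Adj x y → i = j)
    (hcomplete : ∀ x y : V, x ≠ y → ∃ i, (G i).Adj x y)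
    (hused : ∀ i : Fin c, ∃ x y : V, (G i).Adj x y)
    (hc : (Fintype.card V - 1) * (Fintype.card V - 2) / 2 + 2 ≤ c) :
    ∃ (v : Fin (Fintype.card V) → V) (col : Fin (Fintype.card V) → Fin c),
      IsPCCycle G (Fintype.card V) v col := by
  classical
  set n := Fintype.card V with hn
  have hcpos : 0 < c := by omega
  -- the colouring function
  set colr : V → V → Fin c := fun x y =>
    if h : x ≠ y then Classical.choose (hcomplete x y h) else ⟨0, hcpos⟩ with hcolr
  have colr_adj : ∀ (x y : V), x ≠ y → (G (colr x y)).Adj x y := by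
    intro x y h
    simp only [hcolr, dif_pos h]
    exact Classical.choose_spec (hcomplete x y h)
  have colr_eq : ∀ (x y : V) (i : Fin c), (G i).Adj x y → colr x y = i := by
    intro x y i h
    exact hsimple _ _ _ _ (colr_adj x y h.ne) h
  have colr_symm : ∀ x y : V, colr x y = colr y x := by
    intro x y
    by_cases h : x = y
    · rw [h]
    · exact (colr_eq y x _ ((colr_adj x y h).symm)).symm
  -- the colouring on nondiagonal Sym2 elements
  set φ : Sym2 V → Fin c := Sym2.lift ⟨colr, colr_symm⟩ with hφ
  have φ_mk : ∀ x y : V, φ s(x, y) = colr x y := fun x y => rfl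
  set ND := {z : Sym2 V // ¬ z.IsDiag} with hND
  set m := Fintype.card ND with hm0
  have hmval : m = n.choose 2 := by rw [hm0, Sym2.card_subtype_not_diag, hn]
  set φ' : ND → Fin c := fun z => φ z.1 with hφ'
  have hsurj : Function.Surjective φ' := by
    intro i
    obtain ⟨x, y, hadj⟩ := hused i
    refine ⟨⟨s(x, y), by rw [Sym2.mk_isDiag_iff]; exact hadj.ne⟩, ?_⟩
    exact colr_eq x y i hadj
  have hNDne : Nonempty ND := ⟨(hsurj ⟨0, hcpos⟩).choose⟩
  have hcm : c ≤ m := by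
    rw [hm0]
    simpa using Fintype.card_le_of_surjective φ' hsurj
  -- n ≥ 3
  have hn3 : 3 ≤ n := by
    by_contra h
    have h0 : n = 0 ∨ n = 1 ∨ n = 2 := by omega
    have h2 : n.choose 2 ≤ 1 := by
      rcases h0 with h0 | h0 | h0 <;> rw [h0] <;> decide
    omega
  -- R := excess
  set R := m - c with hR
  have hRn : R ≤ n - 3 := by
    have e1 : 2 * ((n - 1) * (n - 2) / 2) = (n - 1) * (n - 2) := by
      have : Even ((n - 2) * (n - 1)) := by
        have := Nat.even_mul_succ_self (n - 2)
        have h' : (n - 2) + 1 = n - 1 := by omega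
        rwa [h'] at this
      rw [mul_comm] at this
      obtain ⟨t, ht⟩ := this
      omega
    have e2 : 2 * m = n * (n - 1) := by
      have hev : Even (n * (n - 1)) := by
        have := Nat.even_mul_succ_self (n - 1)
        have h' : (n - 1) + 1 = n := by omega
        rwa [h', mul_comm] at this
      obtain ⟨t, ht⟩ := hev
      rw [hmval, Nat.choose_two_right]
      omega
    have e3 : n * (n - 1) = (n - 1) * (n - 2) + 2 * (n - 1) := by
      obtain ⟨k, hk⟩ : ∃ k, n = k + 3 := ⟨n - 3, by omega⟩
      rw [hk]
      have h1 : k + 3 - 1 = k + 2 := by omega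
      have h2 : k + 3 - 2 = k + 1 := by omega
      rw [h1, h2]; ring
    omega
  -- fibers of φ'
  set Fi : Fin c → Finset ND := fun i => univ.filter (fun z => φ' z = i) with hFi
  have hfib1 : ∀ i : Fin c, 1 ≤ (Fi i).card := by
    intro i
    obtain ⟨z, hz⟩ := hsurj i
    refine Finset.card_pos.mpr ⟨z, ?_⟩
    simp [hFi, hz]
  have hmsum : ∑ i : Fin c, (Fi i).card = m := by
    have := Finset.card_eq_sum_card_fiberwise
      (s := (univ : Finset ND)) (t := (univ : Finset (Fin c))) (f := φ')
      (fun z _ => mem_univ _)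
    rw [Finset.card_univ] at this
    exact this.symm
  have hsum : ∑ i : Fin c, ((Fi i).card - 1) = R := by
    have h2 : ∑ i : Fin c, ((Fi i).card - 1 + 1) = ∑ i : Fin c, (Fi i).card :=
      Finset.sum_congr rfl (fun i _ => by have := hfib1 i; omega)
    rw [Finset.sum_add_distrib, Finset.sum_const, Finset.card_univ, Fintype.card_fin,
      smul_eq_mul, mul_one, hmsum] at h2
    omega
  have hfibR : ∀ i : Fin c, (Fi i).card ≤ R + 1 := by
    intro i
    have h' : (Fi i).card - 1 ≤ ∑ j : Fin c, ((Fi j).card - 1) :=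
      Finset.single_le_sum (f := fun i => (Fi i).card - 1)
        (fun i _ => Nat.zero_le _) (mem_univ i)
    rw [hsum] at h'
    omega
  -- the set of ordered pairs of distinct same-coloured edges
  set P : Finset (ND × ND) :=
    univ.filter (fun p => φ' p.1 = φ' p.2 ∧ p.1 ≠ p.2) with hPdef
  have hP : P = univ.biUnion (fun i : Fin c => (Fi i).offDiag) := by
    ext p
    constructor
    · intro hp
      rw [hPdef, mem_filter] at hp
      obtain ⟨-, h1, h2⟩ := hp
      refine Finset.mem_biUnion.mpr ⟨φ' p.2, mem_univ _, Finset.mem_offDiag.mpr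
        ⟨?_, ?_, h2⟩⟩
      · simp only [hFi, mem_filter]; exact ⟨mem_univ _, h1⟩
      · simp only [hFi, mem_filter]
        exact ⟨mem_univ _, by trivial⟩
    · intro hp
      obtain ⟨i, -, hp⟩ := Finset.mem_biUnion.mp hp
      rw [Finset.mem_offDiag] at hp
      obtain ⟨ha, hb, hab⟩ := hp
      simp only [hFi, mem_filter, mem_univ, true_and] at ha hb
      rw [hPdef, mem_filter]
      exact ⟨mem_univ _, ha.trans hb.symm, hab⟩
  have hPcard : P.card ≤ (R + 1) * R := by
    calc P.card ≤ ∑ i : Fin c, (Fi i).offDiag.card := by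
          rw [hP]; exact Finset.card_biUnion_le
      _ = ∑ i : Fin c, (Fi i).card * ((Fi i).card - 1) :=
          Finset.sum_congr rfl (fun i _ => by
            rw [Finset.offDiag_card, ← Nat.mul_pred]; rfl)
      _ ≤ ∑ i : Fin c, (R + 1) * ((Fi i).card - 1) :=
          Finset.sum_le_sum (fun i _ => Nat.mul_le_mul_right _ (hfibR i))
      _ = (R + 1) * R := by rw [← Finset.mul_sum, hsum]
  -- monochromatic triples
  set MT : Finset (V × V × V) := univ.filter (fun t =>
    t.1 ≠ t.2.1 ∧ t.2.1 ≠ t.2.2 ∧ t.1 ≠ t.2.2 ∧ colr t.1 t.2.1 = colr t.2.1 t.2.2)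
    with hMT
  have hMTcard : MT.card ≤ P.card := by
    apply Finset.card_le_card_of_injOn (f := fun t : V × V × V =>
      ((if h : ¬ (s(t.1, t.2.1) : Sym2 V).IsDiag then (⟨s(t.1, t.2.1), h⟩ : ND)
          else Classical.arbitrary ND),
       (if h : ¬ (s(t.2.1, t.2.2) : Sym2 V).IsDiag then (⟨s(t.2.1, t.2.2), h⟩ : ND)
          else Classical.arbitrary ND)))
    · intro t ht
      simp only [hMT, mem_coe, mem_filter, mem_univ, true_and] at ht
      obtain ⟨h1, h2, h3, h4⟩ := ht
      have d1 : ¬ (s(t.1, t.2.1) : Sym2 V).IsDiag := by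
        rw [Sym2.mk_isDiag_iff]; exact h1
      have d2 : ¬ (s(t.2.1, t.2.2) : Sym2 V).IsDiag := by
        rw [Sym2.mk_isDiag_iff]; exact h2
      simp only [dif_pos d1, dif_pos d2]
      simp only [hPdef, mem_coe, mem_filter, mem_univ, true_and]
      constructor
      · rw [hφ']; simpa [φ_mk] using h4
      · intro hcontra
        have : (s(t.1, t.2.1) : Sym2 V) = s(t.2.1, t.2.2) :=
          congrArg Subtype.val hcontra
        rw [Sym2.eq_iff] at this
        rcases this with ⟨ha, hb⟩ | ⟨ha, hb⟩
        · exact h1 ha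
        · exact h3 ha
    · intro t ht t' ht' htt
      simp only [hMT, Finset.coe_filter, Set.mem_setOf_eq, mem_univ, true_and] at ht ht'
      obtain ⟨h1, h2, h3, h4⟩ := ht
      obtain ⟨h1', h2', h3', h4'⟩ := ht'
      have d1 : ¬ (s(t.1, t.2.1) : Sym2 V).IsDiag := by rw [Sym2.mk_isDiag_iff]; exact h1
      have d2 : ¬ (s(t.2.1, t.2.2) : Sym2 V).IsDiag := by rw [Sym2.mk_isDiag_iff]; exact h2
      have d1' : ¬ (s(t'.1, t'.2.1) : Sym2 V).IsDiag := by rw [Sym2.mk_isDiag_iff]; exact h1'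
      have d2' : ¬ (s(t'.2.1, t'.2.2) : Sym2 V).IsDiag := by rw [Sym2.mk_isDiag_iff]; exact h2'
      simp only [dif_pos d1, dif_pos d2, dif_pos d1', dif_pos d2'] at htt
      have e1 : (s(t.1, t.2.1) : Sym2 V) = s(t'.1, t'.2.1) :=
        congrArg Subtype.val (congrArg Prod.fst htt)
      have e2 : (s(t.2.1, t.2.2) : Sym2 V) = s(t'.2.1, t'.2.2) :=
        congrArg Subtype.val (congrArg Prod.snd htt)
      rw [Sym2.eq_iff] at e1 e2
      have hv : t.2.1 = t'.2.1 := by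
        rcases e1 with ⟨ha, hb⟩ | ⟨ha, hb⟩
        · exact hb
        · rcases e2 with ⟨hc, hd⟩ | ⟨hc, hd⟩
          · exact hc
          · exact absurd (ha.trans hd.symm) h3
      have hu : t.1 = t'.1 := by
        rcases e1 with ⟨ha, hb⟩ | ⟨ha, hb⟩
        · exact ha
        · exact absurd (hb.symm.trans hv) h1'
      have hw : t.2.2 = t'.2.2 := by
        rcases e2 with ⟨hc, hd⟩ | ⟨hc, hd⟩
        · exact hd
        · exact absurd (hv.symm.trans hc) h2'
      exact Prod.ext hu (Prod.ext hv hw)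
  -- distinctness of cyclic successors
  have hcsval : ∀ i : Fin n, (Fin.cyclicSucc i).val = (i.val + 1) % n := fun i => rfl
  have hmodchar : ∀ k : ℕ, k < n → (k + 1) % n = if k + 1 = n then 0 else k + 1 := by
    intro k hk
    split
    · simp [*, Nat.mod_self]
    · exact Nat.mod_eq_of_lt (by omega)
  have hkey : ∀ j : Fin n, (Fin.cyclicSucc j).val = if j.val + 1 = n then 0 else j.val + 1 := by
    intro j
    rw [hcsval]
    exact hmodchar _ j.isLt
  have hdist : ∀ i : Fin n, i ≠ i.cyclicSucc ∧ i ≠ i.cyclicSucc.cyclicSucc ∧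
      i.cyclicSucc ≠ i.cyclicSucc.cyclicSucc := by
    intro i
    have hi := i.isLt
    have hi2 := (Fin.cyclicSucc i).isLt
    have A := hkey i
    have B := hkey i.cyclicSucc
    refine ⟨?_, ?_, ?_⟩ <;> intro h <;> have hv := congrArg Fin.val h <;>
      split at A <;> split at B <;> omega
  -- bad bijections
  set Bad : Finset (Fin n ≃ V) := univ.filter (fun e => ∃ i : Fin n,
    colr (e i) (e i.cyclicSucc) = colr (e i.cyclicSucc) (e i.cyclicSucc.cyclicSucc))
    with hBad
  set S : Fin n → V × V × V → Finset (Fin n ≃ V) := fun i t =>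
    univ.filter (fun e => e i = t.1 ∧ e i.cyclicSucc = t.2.1 ∧
      e i.cyclicSucc.cyclicSucc = t.2.2) with hS
  have hsub : Bad ⊆ univ.biUnion (fun i : Fin n => MT.biUnion (fun t => S i t)) := by
    intro e he
    simp only [hBad, mem_filter, mem_univ, true_and] at he
    obtain ⟨i, hi⟩ := he
    rw [Finset.mem_biUnion]
    refine ⟨i, mem_univ _, ?_⟩
    rw [Finset.mem_biUnion]
    refine ⟨(e i, e i.cyclicSucc, e i.cyclicSucc.cyclicSucc), ?_, ?_⟩
    · simp only [hMT, mem_filter, mem_univ, true_and]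
      obtain ⟨d1, d2, d3⟩ := hdist i
      exact ⟨fun h => d1 (e.injective h), fun h => d3 (e.injective h),
        fun h => d2 (e.injective h), hi⟩
    · simp [hS]
  have hScard : ∀ (i : Fin n) (t : V × V × V), (S i t).card ≤ Nat.factorial (n - 3) := by
    intro i t
    obtain ⟨d1, d2, d3⟩ := hdist i
    exact aux_card_fix3 rfl t.1 t.2.1 t.2.2 d1 d2 d3
  have hBadcard : Bad.card ≤ n * ((n - 2) * (n - 3) * Nat.factorial (n - 3)) := by
    calc Bad.card ≤ (univ.biUnion (fun i : Fin n => MT.biUnion (fun t => S i t))).card :=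
          Finset.card_le_card hsub
      _ ≤ ∑ i : Fin n, (MT.biUnion (fun t => S i t)).card := Finset.card_biUnion_le
      _ ≤ ∑ i : Fin n, ∑ t ∈ MT, (S i t).card :=
          Finset.sum_le_sum (fun i _ => Finset.card_biUnion_le)
      _ ≤ ∑ i : Fin n, ∑ t ∈ MT, Nat.factorial (n - 3) :=
          Finset.sum_le_sum (fun i _ => Finset.sum_le_sum (fun t _ => hScard i t))
      _ = n * (MT.card * Nat.factorial (n - 3)) := by
          simp [Finset.sum_const, mul_comm]
      _ ≤ n * ((n - 2) * (n - 3) * Nat.factorial (n - 3)) := by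
          apply Nat.mul_le_mul_left
          apply Nat.mul_le_mul_right
          calc MT.card ≤ P.card := hMTcard
            _ ≤ (R + 1) * R := hPcard
            _ ≤ (n - 2) * (n - 3) := Nat.mul_le_mul (by omega) hRn
  have htotal : Fintype.card (Fin n ≃ V) = Nat.factorial n := by
    rw [Fintype.card_equiv (Fintype.equivFin V).symm, Fintype.card_fin]
  have hlt : Bad.card < Fintype.card (Fin n ≃ V) := by
    rw [htotal]
    apply lt_of_le_of_lt hBadcard
    obtain ⟨k, hk⟩ : ∃ k, n = k + 3 := ⟨n - 3, by omega⟩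
    rw [hk]
    have h1 : k + 3 - 2 = k + 1 := by omega
    have h2 : k + 3 - 3 = k := by omega
    rw [h1, h2]
    have hfact : (k + 3).factorial = (k + 3) * ((k + 2) * ((k + 1) * k.factorial)) := by
      rw [show k + 3 = (k + 2) + 1 from rfl, Nat.factorial_succ,
        show k + 2 = (k + 1) + 1 from rfl, Nat.factorial_succ, Nat.factorial_succ]
    rw [hfact]
    have hkpos : 0 < k.factorial := Nat.factorial_pos k
    have : (k + 1) * k * k.factorial < (k + 2) * ((k + 1) * k.factorial) := by
      nlinarith
    calc (k + 3) * ((k + 1) * k * k.factorial)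
        < (k + 3) * ((k + 2) * ((k + 1) * k.factorial)) := by
          exact mul_lt_mul_of_pos_left this (by omega)
      _ = _ := rfl
  -- extract a good bijection
  have hex : ∃ e : Fin n ≃ V, e ∉ Bad := by
    by_contra h
    push_neg at h
    have : Bad = univ := Finset.eq_univ_iff_forall.mpr h
    rw [this, Finset.card_univ] at hlt
    exact lt_irrefl _ hlt
  obtain ⟨e, he⟩ := hex
  simp only [hBad, mem_filter, mem_univ, true_and, not_exists] at he
  refine ⟨e, fun i => colr (e i) (e i.cyclicSucc), ?_, e.injective, ?_, ?_⟩
  · omega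
  · intro i
    obtain ⟨d1, -, -⟩ := hdist i
    exact colr_adj _ _ (fun h => d1 (e.injective h))
  · intro i
    exact he i
end

section
/- The minimum monochromatic degree threshold d(n,c) forcing a properly coloured cycle satisfies d(n,c) ≥ (log_c n − log_c log_c n)/c for c-edge-coloured graphs; equivalently, for every c ≥ 2 and infinitely many n there exists a c-edge-coloured graph of order n with minimum monochromatic degree at least ⌈(log_c n − log_c log_c n)/c⌉ − 1 and no properly coloured cycle. -/
namespace Gutin
variable {c : ℕ}

/-- Adjacency relation on words over `Fin c`: `u` and `v` are adjacent in colour `i`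
iff one is a prefix of the other and `i` is the first letter beyond the prefix. -/
def Rel (i : Fin c) (u v : List (Fin c)) : Prop :=
  (∃ t, v = u ++ i :: t) ∨ (∃ t, u = v ++ i :: t)

lemma Rel.symm {i : Fin c} {u v : List (Fin c)} (h : Rel i u v) : Rel i v u := h.elim Or.inr Or.inl

lemma Rel.ne {i : Fin c} {u v : List (Fin c)} (h : Rel i u v) : u ≠ v := by
  rintro rfl
  rcases h with ⟨t, h⟩ | ⟨t, h⟩ <;>
  · apply_fun List.length at h
    simp at h

lemma rel_disjoint {i j : Fin c} {u v : List (Fin c)} (h1 : Rel i u v) (h2 : Rel j u v) :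
    i = j := by
  rcases h1 with ⟨t, h1⟩ | ⟨t, h1⟩ <;> rcases h2 with ⟨s, h2⟩ | ⟨s, h2⟩
  · rw [h2] at h1
    exact (List.cons_eq_cons.mp (List.append_cancel_left h1)).1.symm
  · exfalso; apply_fun List.length at h1 h2; simp at h1 h2; omega
  · exfalso; apply_fun List.length at h1 h2; simp at h1 h2; omega
  · rw [h2] at h1
    exact (List.cons_eq_cons.mp (List.append_cancel_left h1)).1.symm

lemma rel_head? {i : Fin c} {u v : List (Fin c)} (h : Rel i u v) (hu : u ≠ []) (hv : v ≠ []) :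
    u.head? = v.head? := by
  rcases h with ⟨t, rfl⟩ | ⟨t, rfl⟩
  · cases u with
    | nil => simp_all
    | cons a l => simp
  · cases v with
    | nil => simp_all
    | cons a l => simp

lemma rel_nil_left {i : Fin c} {v : List (Fin c)} (h : Rel i [] v) : ∃ t, v = i :: t := by
  rcases h with ⟨t, rfl⟩ | ⟨t, h⟩
  · exact ⟨t, rfl⟩
  · simp at h

lemma rel_cons {i a : Fin c} {u v : List (Fin c)} (h : Rel i (a :: u) (a :: v)) : Rel i u v := by
  rcases h with ⟨t, h⟩ | ⟨t, h⟩
  · exact Or.inl ⟨t, by simpa using h⟩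
  · exact Or.inr ⟨t, by simpa using h⟩

def emb (k : ℕ) (hk : 0 < k) (m : ℕ) : Fin k := ⟨m % k, Nat.mod_lt _ hk⟩

lemma cyclicSucc_emb (k : ℕ) (hk : 0 < k) (m : ℕ) :
    (emb k hk m).cyclicSucc = emb k hk (m + 1) := by
  simp only [Fin.cyclicSucc, emb, Fin.mk.injEq]
  exact Nat.mod_add_mod m k 1

lemma emb_val {k : ℕ} (hk : 0 < k) (j : Fin k) : emb k hk j.val = j := by
  simp [emb, Nat.mod_eq_of_lt j.isLt]

lemma emb_ne {k : ℕ} (hk : 0 < k) (j : Fin k) {o : ℕ} (h1 : 0 < o) (h2 : o < k) :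
    emb k hk (j.val + o) ≠ j := by
  intro h
  have hval : (j.val + o) % k = j.val := congrArg Fin.val h
  rcases Nat.lt_or_ge (j.val + o) k with hlt | hge
  · rw [Nat.mod_eq_of_lt hlt] at hval; omega
  · have h2k : j.val + o - k < k := by have := j.isLt; omega
    rw [Nat.mod_eq_sub_mod hge, Nat.mod_eq_of_lt h2k] at hval
    have := j.isLt; omega

lemma eq_cons_of_head? {a : Fin c} {l : List (Fin c)} (hl : l ≠ []) (h : l.head? = some a) :
    l = a :: l.tail := by
  cases l with
  | nil => simp_all
  | cons b t => simp at h ⊢; exact h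

/-- Key lemma: the word graph has no properly coloured cycle. -/
lemma no_cycle (s : ℕ) : ∀ {k : ℕ}, 2 ≤ k → ∀ (u : Fin k → List (Fin c)) (col : Fin k → Fin c),
    Function.Injective u → (∀ j, Rel (col j) (u j) (u j.cyclicSucc)) →
    (∀ j, col j ≠ col j.cyclicSucc) → (∑ j, (u j).length ≤ s) → False := by
  induction s using Nat.strong_induction_on with
  | _ s IH =>
    intro k hk u col hinj hA hC hs
    have hk0 : 0 < k := by omega
    rcases Nat.lt_or_ge k 3 with h3 | h3
    · -- k = 2
      obtain rfl : k = 2 := by omega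
      have e0 : (0 : Fin 2).cyclicSucc = 1 := rfl
      have e1 : (1 : Fin 2).cyclicSucc = 0 := rfl
      have A0 := hA 0
      have A1 := (hA 1).symm
      rw [e0] at A0
      rw [e1] at A1
      exact hC 0 (by rw [e0]; exact rel_disjoint A0 A1)
    · -- k ≥ 3
      by_cases hnil : ∃ j0, u j0 = []
      · obtain ⟨j0, hj0⟩ := hnil
        have hne : ∀ j, j ≠ j0 → u j ≠ [] := by
          intro j hj h
          exact hj (hinj (h.trans hj0.symm))
        have hA0 := hA j0
        rw [hj0] at hA0
        obtain ⟨t1, ht1⟩ := rel_nil_left hA0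
        set j2 := emb k hk0 (j0.val + (k - 1)) with hj2def
        have hj2succ : j2.cyclicSucc = j0 := by
          rw [hj2def, cyclicSucc_emb]
          have h1 : j0.val + (k - 1) + 1 = j0.val + k := by omega
          rw [h1]
          apply Fin.ext
          show (j0.val + k) % k = j0.val
          rw [Nat.add_mod_right]
          exact Nat.mod_eq_of_lt j0.isLt
        have hbase : emb k hk0 (j0.val + 1) = j0.cyclicSucc := by
          apply Fin.ext
          rfl
        have hA2 := hA j2
        rw [hj2succ, hj0] at hA2
        obtain ⟨t2, ht2⟩ := rel_nil_left hA2.symm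
        have chain : ∀ m, 1 ≤ m → m ≤ k - 1 →
            (u (emb k hk0 (j0.val + m))).head? = (u j0.cyclicSucc).head? := by
          intro m
          induction m with
          | zero => omega
          | succ m ihm =>
            intro _ hm1
            rcases Nat.eq_zero_or_pos m with rfl | hmpos
            · rw [hbase]
            · have prev := ihm hmpos (by omega)
              have hne1 : emb k hk0 (j0.val + m) ≠ j0 := emb_ne hk0 j0 (by omega) (by omega)
              have hne2 : emb k hk0 (j0.val + (m+1)) ≠ j0 := emb_ne hk0 j0 (by omega) (by omega)
              have hedge := hA (emb k hk0 (j0.val + m))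
              rw [cyclicSucc_emb] at hedge
              have hassoc : j0.val + m + 1 = j0.val + (m + 1) := by omega
              rw [hassoc] at hedge
              have heq := rel_head? hedge (hne _ hne1) (hne _ hne2)
              rw [← prev, ← heq]
        have hfin := chain (k - 1) (by omega) le_rfl
        rw [← hj2def] at hfin
        rw [ht1, ht2] at hfin
        simp at hfin
        exact hC j2 (by rw [hj2succ, hfin])
      · -- no empty word: strip common head and recurse
        push_neg at hnil
        have hsame : ∀ j, (u j).head? = (u j.cyclicSucc).head? := fun j =>
          rel_head? (hA j) (hnil j) (hnil _)
        have hconstm : ∀ m, (u (emb k hk0 m)).head? = (u (emb k hk0 0)).head? := by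
          intro m
          induction m with
          | zero => rfl
          | succ m ihm => rw [← cyclicSucc_emb, ← hsame]; exact ihm
        have hconst : ∀ j, (u j).head? = (u (emb k hk0 0)).head? := by
          intro j
          rw [← emb_val hk0 j]
          exact hconstm j.val
        obtain ⟨a, t0, ht0⟩ := List.exists_cons_of_ne_nil (hnil (emb k hk0 0))
        have hheada : ∀ j, (u j).head? = some a := by
          intro j
          rw [hconst j, ht0]
          rfl
        have hcons : ∀ j, u j = a :: (u j).tail := fun j =>
          eq_cons_of_head? (hnil j) (hheada j)
        set u' := fun j => (u j).tail with hu'def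
        have hinj' : Function.Injective u' := by
          intro x y h
          apply hinj
          rw [hcons x, hcons y]
          simpa [hu'def] using h
        have hA' : ∀ j, Rel (col j) (u' j) (u' j.cyclicSucc) := by
          intro j
          have := hA j
          rw [hcons j, hcons j.cyclicSucc] at this
          exact rel_cons this
        have hlen : ∀ j, (u j).length = (u' j).length + 1 := by
          intro j
          rw [hcons j]
          simp [hu'def]
        have hsum : ∑ j, (u' j).length + k = ∑ j, (u j).length := by
          rw [Finset.sum_congr rfl (fun j _ => hlen j)]
          rw [Finset.sum_add_distrib]
          simp
        have hklek : k ≤ s := by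
          have : k ≤ ∑ j, (u j).length := by omega
          omega
        exact IH (s - 1) (by omega) hk u' col hinj' hA' hC (by omega)

def allLists (c : ℕ) : ℕ → Finset (List (Fin c))
  | 0 => {[]}
  | m + 1 => {[]} ∪ (Finset.univ ×ˢ allLists c m).image fun p => p.1 :: p.2

lemma mem_allLists (m : ℕ) (l : List (Fin c)) : l ∈ allLists c m ↔ l.length ≤ m := by
  induction m generalizing l with
  | zero => simp [allLists, List.length_eq_zero_iff]
  | succ m ih =>
    cases l with
    | nil => simp [allLists]
    | cons a t => simp [allLists, ih, Nat.succ_le_succ_iff]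

lemma card_allLists_le (hc : 2 ≤ c) (m : ℕ) : (allLists c m).card ≤ c ^ (m + 1) - 1 := by
  induction m with
  | zero =>
    simp [allLists]
    omega
  | succ m ih =>
    have h1 : (allLists c (m+1)).card ≤ 1 + c * (allLists c m).card := by
      rw [allLists]
      refine le_trans (Finset.card_union_le _ _) ?_
      simp only [Finset.card_singleton]
      gcongr
      refine le_trans (Finset.card_image_le) ?_
      rw [Finset.card_product, Finset.card_univ, Fintype.card_fin]
    have hx : (1:ℕ) ≤ c ^ (m + 1) := Nat.one_le_pow _ _ (by omega)
    have hpow : c ^ (m + 1 + 1) = c * c ^ (m + 1) := by ring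
    have hx1 : c ^ (m + 1) = (c ^ (m + 1) - 1) + 1 := by omega
    have h2 : c * c ^ (m + 1) = c * (c ^ (m + 1) - 1) + c := by
      conv_lhs => rw [hx1]
      rw [Nat.mul_add, Nat.mul_one]
    have h3 : c * (allLists c m).card ≤ c * (c ^ (m + 1) - 1) :=
      Nat.mul_le_mul_left _ ih
    omega

lemma length_eq_sum_count (l : List (Fin c)) : l.length = ∑ i : Fin c, l.count i := by
  induction l with
  | nil => simp
  | cons a t ih =>
    simp only [List.length_cons, List.count_cons, ih]
    rw [Finset.sum_add_distrib]
    simp [Finset.sum_ite_eq]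

/-- The finset of proper prefixes of `u` which are followed by letter `i`. -/
def PF (i : Fin c) : List (Fin c) → Finset (List (Fin c))
  | [] => ∅
  | a :: u => (if a = i then {([] : List (Fin c))} else ∅) ∪ (PF i u).image (a :: ·)

lemma mem_PF {i : Fin c} : ∀ {u p : List (Fin c)}, p ∈ PF i u → ∃ t, u = p ++ i :: t := by
  intro u
  induction u with
  | nil => intro p hp; simp [PF] at hp
  | cons a u ih =>
    intro p hp
    simp only [PF, Finset.mem_union] at hp
    rcases hp with hp | hp
    · split at hp
      · next h => subst h; simp at hp; subst hp; exact ⟨u, by simp⟩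
      · simp at hp
    · obtain ⟨q, hq, rfl⟩ := Finset.mem_image.mp hp
      obtain ⟨t, rfl⟩ := ih hq
      exact ⟨t, by simp⟩

lemma card_PF (i : Fin c) : ∀ u : List (Fin c), (PF i u).card = u.count i := by
  intro u
  induction u with
  | nil => simp [PF]
  | cons a u ih =>
    rw [PF, Finset.card_union_of_disjoint, Finset.card_image_of_injective _
      (fun x y h => by simpa using h)]
    · rw [ih, List.count_cons]
      by_cases h : a = i
      · subst h
        simp
        omega
      · simp [h, fun hh : i = a => h hh.symm]
    · split
      · simp [Finset.disjoint_left]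
      · simp

end Gutin

/-- (Gutin)  The threshold `d(n,c)` satisfies `d(n,c) ≥ (log_c n − log_c log_c n)/c`:
for every `c ≥ 2` and infinitely many `n` there exists a `c`-edge-coloured graph of
order `n` with minimum monochromatic degree at least
`⌈(log_c n − log_c log_c n)/c⌉ − 1` and no properly coloured cycle. -/
theorem lower_bound_pc_cycle_threshold (c : ℕ) (hc : 2 ≤ c) (N : ℕ) :
    ∃ n : ℕ, N ≤ n ∧
      ∃ G : Fin c → SimpleGraph (Fin n),
        (∀ (i j : Fin c) (x y : Fin n), (G i).Adj x y → (G j).Adj x y → i = j) ∧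
        (∀ (v : Fin n) (i : Fin c),
          ⌈(Real.logb c n - Real.logb c (Real.logb c n)) / c⌉₊ - 1 ≤
            ((G i).neighborSet v).ncard) ∧
        ¬ ∃ (k : ℕ) (v : Fin k → Fin n) (col : Fin k → Fin c),
          IsPCCycle G k v col := by
  classical
  set d := max N 1 with hd
  have hd1 : 1 ≤ d := le_max_right _ _
  have hdN : N ≤ d := le_max_left _ _
  set W : Finset (List (Fin c)) :=
    (Gutin.allLists c (c * d)).filter (fun l => ∀ i, l.count i ≤ d) with hW
  have mem_W : ∀ l : List (Fin c), l ∈ W ↔ ∀ i, l.count i ≤ d := by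
    intro l
    rw [hW, Finset.mem_filter, Gutin.mem_allLists]
    constructor
    · exact fun h => h.2
    · intro h
      refine ⟨?_, h⟩
      rw [Gutin.length_eq_sum_count l]
      calc ∑ i : Fin c, l.count i ≤ ∑ _i : Fin c, d :=
            Finset.sum_le_sum (fun i _ => h i)
        _ = c * d := by simp [Finset.sum_const, mul_comm]
  set n := W.card with hn
  -- lower bound n ≥ d + 1
  have i0 : Fin c := ⟨0, by omega⟩
  have hnd : d + 1 ≤ n := by
    have hsub : (Finset.range (d+1)).image (fun m => List.replicate m i0) ⊆ W := by
      intro l hl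
      obtain ⟨m, hm, rfl⟩ := Finset.mem_image.mp hl
      rw [mem_W]
      intro j
      rw [List.count_replicate]
      split
      · simp at hm; omega
      · omega
    have hcard : ((Finset.range (d+1)).image (fun m => List.replicate m i0)).card = d + 1 := by
      rw [Finset.card_image_of_injective _ (fun a b h => by
        have := congrArg List.length h
        simpa using this)]
      simp
    calc d + 1 = _ := hcard.symm
      _ ≤ n := Finset.card_le_card hsub
  -- lower bound n ≥ c + 1
  have hnc : c + 1 ≤ n := by
    have hsub : ({([] : List (Fin c))} : Finset _) ∪
        Finset.univ.image (fun i : Fin c => [i]) ⊆ W := by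
      intro l hl
      rcases Finset.mem_union.mp hl with hl | hl
      · simp at hl; subst hl; rw [mem_W]; intro j; simp
      · obtain ⟨i, _, rfl⟩ := Finset.mem_image.mp hl
        rw [mem_W]
        intro j
        rw [List.count_cons]
        simp only [List.count_nil]
        split <;> omega
    have hcard : (({([] : List (Fin c))} : Finset _) ∪
        Finset.univ.image (fun i : Fin c => [i])).card = c + 1 := by
      rw [Finset.card_union_of_disjoint (by simp [Finset.disjoint_left])]
      rw [Finset.card_image_of_injective _ (fun a b h => by simpa using h)]
      simp [add_comm]
    calc c + 1 = _ := hcard.symm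
      _ ≤ n := Finset.card_le_card hsub
  -- upper bound
  have hnub : n ≤ c ^ (c * d + 1) - 1 :=
    le_trans (Finset.card_le_card (Finset.filter_subset _ _)) (Gutin.card_allLists_le hc _)
  refine ⟨n, by omega, ?_⟩
  have hcardW : Fintype.card (↥W) = n := Fintype.card_coe W
  set e : ↥W ≃ Fin n := Fintype.equivFinOfCardEq hcardW with he
  set g : Fin n → List (Fin c) := fun x => ((e.symm x : ↥W) : List (Fin c)) with hg
  have hginj : Function.Injective g := by
    intro x y h
    have : e.symm x = e.symm y := Subtype.ext h
    simpa using congrArg e this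
  have hgmem : ∀ x, g x ∈ W := fun x => (e.symm x).2
  set G : Fin c → SimpleGraph (Fin n) := fun i =>
    { Adj := fun x y => Gutin.Rel i (g x) (g y)
      symm := ⟨fun x y h => h.symm⟩
      loopless := ⟨fun x h => h.ne rfl⟩ }
    with hG
  have hGadj : ∀ (i : Fin c) (x y : Fin n), (G i).Adj x y ↔ Gutin.Rel i (g x) (g y) := by
    intro i x y; rw [hG]
  refine ⟨G, ?_, ?_, ?_⟩
  · intro i j x y h1 h2
    exact Gutin.rel_disjoint ((hGadj i x y).mp h1) ((hGadj j x y).mp h2)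
  · intro x i
    have hdeg : d ≤ ((G i).neighborSet x).ncard := by
      set u := g x with hu
      have hucount : ∀ j, u.count j ≤ d := (mem_W u).mp (hgmem x)
      set m := u.count i with hm
      set NL : Finset (List (Fin c)) :=
        Gutin.PF i u ∪ (Finset.range (d - m)).image
          (fun k => u ++ i :: List.replicate k i) with hNL
      have hNLsub : ∀ p ∈ NL, p ∈ W := by
        intro p hp
        rcases Finset.mem_union.mp hp with hp | hp
        · obtain ⟨t, ht⟩ := Gutin.mem_PF hp
          rw [mem_W]
          intro j
          refine le_trans ?_ (hucount j)
          rw [ht, List.count_append]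
          omega
        · obtain ⟨k, hk, rfl⟩ := Finset.mem_image.mp hp
          simp only [Finset.mem_range] at hk
          rw [mem_W]
          intro j
          rw [List.count_append, List.count_cons, List.count_replicate]
          have h1 := hucount j
          by_cases hj : (i == j) = true
          · rw [if_pos hj, if_pos hj]
            have hij : i = j := by simpa using hj
            subst hij
            omega
          · rw [if_neg hj, if_neg hj]
            omega
      have hNLrel : ∀ p ∈ NL, Gutin.Rel i u p := by
        intro p hp
        rcases Finset.mem_union.mp hp with hp | hp
        · exact Or.inr (Gutin.mem_PF hp)
        · obtain ⟨k, _, rfl⟩ := Finset.mem_image.mp hp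
          exact Or.inl ⟨List.replicate k i, rfl⟩
      have hdisj : Disjoint (Gutin.PF i u) ((Finset.range (d - m)).image
          (fun k => u ++ i :: List.replicate k i)) := by
        rw [Finset.disjoint_left]
        intro p hp hp2
        obtain ⟨t, ht⟩ := Gutin.mem_PF hp
        obtain ⟨k, _, rfl⟩ := Finset.mem_image.mp hp2
        have := congrArg List.length ht
        simp only [List.length_append, List.length_cons, List.length_replicate] at this
        omega
      have hNLcard : NL.card = d := by
        rw [hNL, Finset.card_union_of_disjoint hdisj, Gutin.card_PF,
          Finset.card_image_of_injective _ (fun a b h => by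
            have h2 := List.append_cancel_left h
            have h3 := (List.cons_eq_cons.mp h2).2
            have := congrArg List.length h3
            simpa using this)]
        rw [Finset.card_range, ← hm]
        have := hucount i
        omega
      set T : Finset (Fin n) := NL.attach.image
        (fun p => e ⟨p.1, hNLsub p.1 p.2⟩) with hT
      have hTcard : T.card = d := by
        rw [hT, Finset.card_image_of_injective _ (fun p q h => by
          have h2 := e.injective h
          have h3 : p.1 = q.1 := by simpa using h2
          exact Subtype.ext h3),
          Finset.card_attach, hNLcard]
      have hTsub : (↑T : Set (Fin n)) ⊆ (G i).neighborSet x := by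
        intro y hy
        simp only [hT, Finset.coe_image, Set.mem_image, Finset.mem_coe,
          Finset.mem_attach, true_and] at hy
        obtain ⟨p, _, rfl⟩ := hy
        show (G i).Adj x _
        rw [hGadj]
        have : g (e ⟨p.1, hNLsub p.1 p.2⟩) = p.1 := by
          rw [hg]
          simp [Equiv.symm_apply_apply]
        rw [this]
        exact hNLrel p.1 p.2
      have hfin := Set.ncard_le_ncard hTsub (Set.toFinite _)
      rw [Set.ncard_coe_finset, hTcard] at hfin
      exact hfin
    refine le_trans ?_ hdeg
    -- ceiling arithmetic
    have hc1 : (1:ℝ) < c := by exact_mod_cast (by omega : 1 < c)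
    have hn0 : (0:ℝ) < n := by exact_mod_cast (by omega : 0 < n)
    have hlog1 : (1:ℝ) ≤ Real.logb c n := by
      rw [Real.le_logb_iff_rpow_le hc1 hn0, Real.rpow_one]
      exact_mod_cast (by omega : c ≤ n)
    have hloglog : 0 ≤ Real.logb c (Real.logb c n) := Real.logb_nonneg hc1 hlog1
    have hlogn : Real.logb c n ≤ ((c * d + 1 : ℕ) : ℝ) := by
      rw [Real.logb_le_iff_le_rpow hc1 hn0, Real.rpow_natCast]
      have h1 : n ≤ c ^ (c * d + 1) := by omega
      exact_mod_cast h1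
    have hkey : (Real.logb c n - Real.logb c (Real.logb c n)) / c ≤ ((d + 1 : ℕ) : ℝ) := by
      have hcpos : (0:ℝ) < c := by linarith
      rw [div_le_iff₀ hcpos]
      have hcast : ((c * d + 1 : ℕ) : ℝ) = (c:ℝ) * d + 1 := by push_cast; ring
      have h2 : ((d + 1 : ℕ) : ℝ) * c = (c:ℝ) * d + c := by push_cast; ring
      rw [h2]
      rw [hcast] at hlogn
      linarith
    have hceil : ⌈(Real.logb c n - Real.logb c (Real.logb c n)) / c⌉₊ ≤ d + 1 :=
      Nat.ceil_le.mpr hkey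
    omega
  · rintro ⟨k, v, col, hk2, hvinj, hadj, hcol⟩
    exact Gutin.no_cycle (∑ j, (g (v j)).length) hk2 (fun j => g (v j)) col
      (hginj.comp hvinj) (fun j => (hGadj (col j) (v j) (v j.cyclicSucc)).mp (hadj j))
      hcol le_rfl
end
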